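/- arXiv:1906.06323 — 4 statements merged into one kernel-verified Lean document; each statement's English description precedes it below -/
import Mathlib

section
/- Let T be a finite tree (a connected acyclic simple graph) and let uv be an edge of T. Then th₊(T/uv) ≤ th₊(T), where T/uv is the tree obtained from T by contracting the edge uv (identifying u and v and deleting the resulting loop and multiple edges). Consequently, PSD-throttling is monotone under taking connected minors of trees. -/
open SimpleGraph

/-- `v` PSD-forces `w` given blue set `B`: `v` is blue, adjacent to the white vertex `w`,
and `w` is the only white neighbor of `v` in the component of `G - B` containing `w`. -/
def psdForces {V : Type*} (G : SimpleGraph V) (B : Set V) (v w : V) : Prop :=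
  v ∈ B ∧ G.Adj v w ∧ ∃ hw : w ∉ B,
    ∀ (u : V) (hu : u ∉ B), G.Adj v u →
      (G.induce {x | x ∉ B}).Reachable ⟨u, hu⟩ ⟨w, hw⟩ → u = w

/-- One time-step of PSD forcing: all forceable white vertices become blue simultaneously. -/
def psdStep {V : Type*} (G : SimpleGraph V) (B : Set V) : Set V :=
  B ∪ {w | ∃ v, psdForces G B v w}

/-- `B` is a PSD-forcing set of `G` if iterating the PSD color change rule colors all of `V`. -/
def IsPSDForcing {V : Type*} (G : SimpleGraph V) (B : Set V) : Prop :=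
  ∃ t, (psdStep G)^[t] B = Set.univ

/-- The PSD-propagation time of `B` in `G`. -/
noncomputable def psdPt {V : Type*} (G : SimpleGraph V) (B : Set V) : ℕ :=
  sInf {t | (psdStep G)^[t] B = Set.univ}

/-- The PSD-throttling number of `G`. -/
noncomputable def psdTh {V : Type*} (G : SimpleGraph V) : ℕ :=
  sInf {k | ∃ B : Finset V, IsPSDForcing G ↑B ∧ k = B.card + psdPt G ↑B}

/-- The weighted PSD-throttling number of `(G, w)`. -/
noncomputable def psdThW {V : Type*} (G : SimpleGraph V) (w : V → ℕ) : ℕ :=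
  sInf {k | ∃ B : Finset V, IsPSDForcing G ↑B ∧ k = (∑ x ∈ B, w x) + psdPt G ↑B}

/-- The spider `S(l₀, …, l_{k-1})`: a center vertex `none` adjacent to the first vertex
of each of `k` disjoint paths, the `i`-th of order `l i`. -/
def spider (k : ℕ) (l : Fin k → ℕ) : SimpleGraph (Option ((i : Fin k) × Fin (l i))) :=
  SimpleGraph.fromRel (fun x y =>
    (∃ (i : Fin k) (j : Fin (l i)), (j : ℕ) = 0 ∧ x = none ∧ y = some ⟨i, j⟩) ∨
    (∃ (i : Fin k) (j j' : Fin (l i)), (j' : ℕ) = (j : ℕ) + 1 ∧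
      x = some ⟨i, j⟩ ∧ y = some ⟨i, j'⟩))

/-- The balanced spider `T_{α,β}` with `α` legs each of order `β`. -/
abbrev balancedSpider (α β : ℕ) : SimpleGraph (Option ((_ : Fin α) × Fin β)) :=
  spider α (fun _ => β)


namespace PSDAux

/-- closed neighborhood of a set -/
def nbhd {V : Type*} (G : SimpleGraph V) (X : Set V) : Set V :=
  X ∪ {w | ∃ b ∈ X, G.Adj b w}

lemma psdStep_subset_nbhd {V : Type*} (G : SimpleGraph V) (X : Set V) :
    psdStep G X ⊆ nbhd G X := by
  rintro w (hw | ⟨b, hb, hadj, _⟩)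
  · exact Or.inl hw
  · exact Or.inr ⟨b, hb, hadj⟩

lemma nbhd_mono {V : Type*} (G : SimpleGraph V) {X Y : Set V} (h : X ⊆ Y) :
    nbhd G X ⊆ nbhd G Y := by
  rintro w (hw | ⟨b, hb, hadj⟩)
  · exact Or.inl (h hw)
  · exact Or.inr ⟨b, h hb, hadj⟩

lemma exists_walk_of_induce_reachable {V : Type*} {G : SimpleGraph V} {S : Set V} {a c : S}
    (h : (G.induce S).Reachable a c) :
    ∃ w : G.Walk ↑a ↑c, ∀ z ∈ w.support, z ∈ S := by
  obtain ⟨p⟩ := h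
  induction p with
  | nil => exact ⟨.nil, by simp [Subtype.prop]⟩
  | @cons a b c h p ih =>
    obtain ⟨w, hw⟩ := ih
    refine ⟨.cons (by simpa using h) w, ?_⟩
    intro z hz
    rw [Walk.support_cons, List.mem_cons] at hz
    rcases hz with rfl | hz
    · exact a.2
    · exact hw z hz

lemma not_two_paths {V : Type*} {G : SimpleGraph V} (hG : G.IsAcyclic) {a b : V}
    {p q : G.Walk a b} (hp : p.IsPath) (hq : q.IsPath)
    (h : p.getVert 1 ≠ q.getVert 1) : False := by
  have := isAcyclic_iff_path_unique.mp hG ⟨p, hp⟩ ⟨q, hq⟩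
  exact h (by rw [show p = q from congrArg Subtype.val this])

end PSDAux


/-- The graph obtained from `G` by contracting the edge `uv`: the vertex `v` is removed
and `u` becomes adjacent to all former neighbors of `v` (loops and multi-edges deleted). -/
def contractEdge {V : Type*} (G : SimpleGraph V) (u v : V) : SimpleGraph {x : V // x ≠ v} :=
  SimpleGraph.fromRel (fun x y =>
    G.Adj ↑x ↑y ∨ ((x : V) = u ∧ G.Adj v ↑y) ∨ ((y : V) = u ∧ G.Adj v ↑x))

namespace PSDAux

variable {V : Type*} (T : SimpleGraph V) (u v : V)

lemma contract_adj_cases {x y : {z : V // z ≠ v}} (h : (contractEdge T u v).Adj x y) :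
    T.Adj ↑x ↑y ∨ ((x : V) = u ∧ T.Adj v ↑y) ∨ ((y : V) = u ∧ T.Adj v ↑x) := by
  rw [contractEdge, fromRel_adj] at h
  rcases h.2 with (h | h | h) | (h | h | h)
  · exact Or.inl h
  · exact Or.inr (Or.inl h)
  · exact Or.inr (Or.inr h)
  · exact Or.inl h.symm
  · exact Or.inr (Or.inr h)
  · exact Or.inr (Or.inl h)

lemma contract_adj_mk {x y : {z : V // z ≠ v}} (hne : x ≠ y)
    (h : T.Adj ↑x ↑y ∨ ((x : V) = u ∧ T.Adj v ↑y) ∨ ((y : V) = u ∧ T.Adj v ↑x)) :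
    (contractEdge T u v).Adj x y := by
  rw [contractEdge, fromRel_adj]
  exact ⟨hne, Or.inl h⟩

lemma walk_lift (huv : T.Adj u v) {a c : {z : V // z ≠ v}}
    (W : (contractEdge T u v).Walk a c) :
    ∃ W₂ : T.Walk ↑a ↑c, ∀ z ∈ W₂.support,
      (∃ z' ∈ W.support, z = ↑z') ∨
        (z = v ∧ (⟨u, huv.ne⟩ : {z : V // z ≠ v}) ∈ W.support) := by
  induction W with
  | nil => exact ⟨.nil, by simp⟩
  | @cons d e f h W ih =>
    obtain ⟨W₂, hW₂⟩ := ih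
    have hmem : ∀ z, (∃ z' ∈ W.support, z = (z' : V)) ∨
        (z = v ∧ (⟨u, huv.ne⟩ : {z : V // z ≠ v}) ∈ W.support) →
        (∃ z' ∈ (Walk.cons h W).support, z = (z' : V)) ∨
        (z = v ∧ (⟨u, huv.ne⟩ : {z : V // z ≠ v}) ∈ (Walk.cons h W).support) := by
      rintro z (⟨z', hz', rfl⟩ | ⟨rfl, hu⟩)
      · exact Or.inl ⟨z', by simp [hz'], rfl⟩
      · exact Or.inr ⟨rfl, by simp [hu]⟩
    rcases contract_adj_cases T u v h with hR | ⟨hau, hvb⟩ | ⟨hbu, hva⟩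
    · refine ⟨.cons hR W₂, ?_⟩
      intro z hz
      rw [Walk.support_cons, List.mem_cons] at hz
      rcases hz with rfl | hz
      · exact Or.inl ⟨d, by simp⟩
      · exact hmem z (hW₂ z hz)
    · refine ⟨.cons (show T.Adj _ _ by rw [hau]; exact huv) (.cons hvb W₂), ?_⟩
      intro z hz
      rw [Walk.support_cons, Walk.support_cons, List.mem_cons, List.mem_cons] at hz
      rcases hz with rfl | rfl | hz
      · exact Or.inl ⟨d, by simp⟩
      · refine Or.inr ⟨rfl, ?_⟩
        have hde : d = ⟨u, huv.ne⟩ := Subtype.ext hau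
        rw [← hde]
        simp
      · exact hmem z (hW₂ z hz)
    · refine ⟨.cons hva.symm (.cons (show T.Adj _ _ by rw [hbu]; exact huv.symm) W₂), ?_⟩
      intro z hz
      rw [Walk.support_cons, Walk.support_cons, List.mem_cons, List.mem_cons] at hz
      rcases hz with rfl | rfl | hz
      · exact Or.inl ⟨d, by simp⟩
      · refine Or.inr ⟨rfl, ?_⟩
        have hde : e = ⟨u, huv.ne⟩ := Subtype.ext hbu
        rw [← hde]
        simp [Walk.start_mem_support]
      · exact hmem z (hW₂ z hz)

lemma contract_key (hT : T.IsTree) (huv : T.Adj u v) (X : Set {z : V // z ≠ v})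
    {b x y : {z : V // z ≠ v}} (hb : b ∈ X)
    (hbx : (contractEdge T u v).Adj b x) (hby : (contractEdge T u v).Adj b y)
    (W' : (contractEdge T u v).Walk x y) (hW' : ∀ z ∈ W'.support, z ∉ X) : x = y := by
  classical
  by_contra hxy
  have hacy := hT.IsAcyclic
  obtain ⟨W, hW⟩ := walk_lift T u v huv W'
  set p : T.Walk ↑x ↑y := (W.toPath : T.Walk ↑x ↑y) with hpdef
  have hp : p.IsPath := W.toPath.2
  have hpsup : ∀ z ∈ p.support,
      (∃ z' ∈ W'.support, z = (z' : V)) ∨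
        (z = v ∧ (⟨u, huv.ne⟩ : {z : V // z ≠ v}) ∈ W'.support) :=
    fun z hz => hW z (W.support_toPath_subset hz)
  have hbsup : (b : V) ∉ p.support := by
    intro hmem
    rcases hpsup _ hmem with ⟨z', hz', hzz⟩ | ⟨hzv, _⟩
    · have hzb : z' = b := Subtype.ext hzz.symm
      exact hW' z' hz' (hzb ▸ hb)
    · exact b.2 hzv
  have hxv : (x : V) ≠ v := x.2
  have hyv : (y : V) ≠ v := y.2
  have hbv : (b : V) ≠ v := b.2
  have hxy' : (x : V) ≠ (y : V) := fun h => hxy (Subtype.ext h)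
  have hbx' : (b : V) ≠ (x : V) := fun h => hbx.ne (Subtype.ext h)
  have hby' : (b : V) ≠ (y : V) := fun h => hby.ne (Subtype.ext h)
  have hvnp : (b : V) = u → v ∉ p.support := by
    intro hbu hv
    rcases hpsup v hv with ⟨z', _, hzz⟩ | ⟨_, hu'⟩
    · exact z'.2 hzz.symm
    · have he : (⟨u, huv.ne⟩ : {z : V // z ≠ v}) = b := Subtype.ext hbu.symm
      exact hW' _ hu' (he ▸ hb)
  rcases contract_adj_cases T u v hbx with hR1 | ⟨hbu, hv1⟩ | ⟨hxu, hv1b⟩ <;>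
    rcases contract_adj_cases T u v hby with hR2 | ⟨hbu2, hv2⟩ | ⟨hyu, hv2b⟩
  · -- R R
    refine not_two_paths hacy (p := Walk.cons hR2 Walk.nil) (q := Walk.cons hR1 p) ?_ ?_ ?_
    · exact Walk.IsPath.nil.cons (by simp [hby'])
    · exact hp.cons hbsup
    · simp only [Walk.getVert_cons_succ, Walk.getVert_zero]
      exact hxy'.symm
  · -- R C1
    refine not_two_paths hacy
      (p := Walk.cons (show T.Adj ↑b v by rw [hbu2]; exact huv) (Walk.cons hv2 Walk.nil))
      (q := Walk.cons hR1 p) ?_ ?_ ?_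
    · exact (Walk.IsPath.nil.cons (by simp [hyv.symm])).cons
        (by simp [Walk.support_cons, hbv, hby'])
    · exact hp.cons hbsup
    · simp only [Walk.getVert_cons_succ, Walk.getVert_zero]
      exact hxv.symm
  · -- R C2
    refine not_two_paths hacy
      (p := Walk.cons hv2b.symm (Walk.cons (show T.Adj v ↑y by rw [hyu]; exact huv.symm)
        Walk.nil))
      (q := Walk.cons hR1 p) ?_ ?_ ?_
    · exact (Walk.IsPath.nil.cons (by simp [hyv.symm])).cons
        (by simp [Walk.support_cons, hbv, hby'])
    · exact hp.cons hbsup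
    · simp only [Walk.getVert_cons_succ, Walk.getVert_zero]
      exact hxv.symm
  · -- C1 R
    refine not_two_paths hacy
      (p := Walk.cons (show T.Adj ↑b v by rw [hbu]; exact huv) (Walk.cons hv1 Walk.nil))
      (q := Walk.cons hR2 p.reverse) ?_ ?_ ?_
    · exact (Walk.IsPath.nil.cons (by simp [hxv.symm])).cons
        (by simp [Walk.support_cons, hbv, hbx'])
    · exact hp.reverse.cons (by simp [Walk.support_reverse, hbsup])
    · simp only [Walk.getVert_cons_succ, Walk.getVert_zero]
      exact hyv.symm
  · -- C1 C1
    have hvp := hvnp hbu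
    refine not_two_paths hacy (p := Walk.cons hv2 Walk.nil) (q := Walk.cons hv1 p) ?_ ?_ ?_
    · exact Walk.IsPath.nil.cons (by simp [hyv.symm])
    · exact hp.cons hvp
    · simp only [Walk.getVert_cons_succ, Walk.getVert_zero]
      exact hxy'.symm
  · -- C1 C2 : b = u = y, impossible
    exact hby.ne (Subtype.ext (hbu.trans hyu.symm))
  · -- C2 R
    by_cases hv : v ∈ p.support
    · refine not_two_paths hacy (p := Walk.cons hR2 Walk.nil)
        (q := Walk.cons hv1b.symm (p.dropUntil v hv)) ?_ ?_ ?_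
      · exact Walk.IsPath.nil.cons (by simp [hby'])
      · exact (hp.dropUntil hv).cons
          (fun hmem => hbsup (Walk.support_dropUntil_subset p hv hmem))
      · simp only [Walk.getVert_cons_succ, Walk.getVert_zero]
        exact hyv
    · refine not_two_paths hacy (p := Walk.cons hR2 Walk.nil)
        (q := Walk.cons hv1b.symm (Walk.cons huv.symm (p.copy hxu rfl))) ?_ ?_ ?_
      · exact Walk.IsPath.nil.cons (by simp [hby'])
      · refine (Walk.IsPath.cons ?_ ?_).cons ?_
        · exact (Walk.isPath_copy p hxu rfl).mpr hp
        · simpa [Walk.support_copy] using hv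
        · simp [Walk.support_cons, Walk.support_copy, hbv, hbsup]
      · simp only [Walk.getVert_cons_succ, Walk.getVert_zero]
        exact hyv
  · -- C2 C1 : b = u = x, impossible
    exact hbx.ne (Subtype.ext (hbu2.trans hxu.symm))
  · -- C2 C2 : x = u = y, impossible
    exact hxy (Subtype.ext (hxu.trans hyu.symm))


lemma nbhd_subset_psdStep_contract (hT : T.IsTree) (huv : T.Adj u v)
    (X : Set {z : V // z ≠ v}) :
    nbhd (contractEdge T u v) X ⊆ psdStep (contractEdge T u v) X := by
  rintro w (hw | ⟨b, hb, hadj⟩)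
  · exact Set.mem_union_left _ hw
  · by_cases hwX : w ∈ X
    · exact Set.mem_union_left _ hwX
    · refine Set.mem_union_right _ ⟨b, hb, hadj, hwX, ?_⟩
      intro x hx hbx hreach
      obtain ⟨W', hW'⟩ := exists_walk_of_induce_reachable hreach
      exact contract_key T u v hT huv X hb hbx hadj W' (fun z hz => hW' z hz)

variable [DecidableEq V]

/-- The projection map onto the contracted vertex set. -/
def proj (hu : u ≠ v) : V → {z : V // z ≠ v} :=
  fun x => if h : x = v then ⟨u, hu⟩ else ⟨x, h⟩

lemma proj_of_ne (hu : u ≠ v) {x : V} (h : x ≠ v) : proj u v hu x = ⟨x, h⟩ := dif_neg h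

lemma proj_v (hu : u ≠ v) : proj u v hu v = ⟨u, hu⟩ := dif_pos rfl

lemma image_nbhd_subset (huv : T.Adj u v) (X : Set V) :
    proj u v huv.ne '' nbhd T X ⊆ nbhd (contractEdge T u v) (proj u v huv.ne '' X) := by
  rintro _ ⟨z, hz | ⟨b, hb, hadj⟩, rfl⟩
  · exact Or.inl ⟨z, hz, rfl⟩
  · by_cases he : proj u v huv.ne z = proj u v huv.ne b
    · exact Or.inl ⟨b, hb, he.symm⟩
    · refine Or.inr ⟨proj u v huv.ne b, ⟨b, hb, rfl⟩, ?_⟩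
      refine contract_adj_mk T u v (Ne.symm he) ?_
      by_cases hbv : b = v
      · by_cases hzv : z = v
        · exact absurd (hzv.trans hbv.symm) hadj.ne'
        · rw [proj_of_ne u v huv.ne hzv, hbv, proj_v]
          exact Or.inr (Or.inl ⟨rfl, hbv ▸ hadj⟩)
      · by_cases hzv : z = v
        · rw [proj_of_ne u v huv.ne hbv, hzv, proj_v]
          exact Or.inr (Or.inr ⟨rfl, hzv ▸ hadj.symm⟩)
        · rw [proj_of_ne u v huv.ne hbv, proj_of_ne u v huv.ne hzv]
          exact Or.inl hadj

lemma image_iterate (hT : T.IsTree) (huv : T.Adj u v) (X : Set V) : ∀ t,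
    proj u v huv.ne '' ((psdStep T)^[t] X) ⊆
      (psdStep (contractEdge T u v))^[t] (proj u v huv.ne '' X) := by
  intro t
  induction t with
  | zero => exact fun z hz => hz
  | succ t ih =>
    rw [Function.iterate_succ_apply', Function.iterate_succ_apply']
    refine subset_trans ?_ (nbhd_subset_psdStep_contract T u v hT huv _)
    refine subset_trans ?_ (nbhd_mono _ ih)
    refine subset_trans ?_ (image_nbhd_subset T u v huv _)
    exact Set.image_mono (psdStep_subset_nbhd T _)

end PSDAux

/-- If `T` is a finite tree and `uv ∈ E(T)`, then `th₊(T/uv) ≤ th₊(T)`: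
PSD-throttling is monotone under edge contraction (hence under connected minors) of trees. -/
theorem stmt2 {V : Type*} [Fintype V] [DecidableEq V] (T : SimpleGraph V) (hT : T.IsTree)
    (u v : V) (huv : T.Adj u v) :
    psdTh (contractEdge T u v) ≤ psdTh T := by
  classical
  have hne : {k | ∃ B : Finset V, IsPSDForcing T ↑B ∧ k = B.card + psdPt T ↑B}.Nonempty :=
    ⟨Finset.univ.card + psdPt T ↑(Finset.univ : Finset V), Finset.univ,
      ⟨0, by simp⟩, rfl⟩
  obtain ⟨B, hBf, hBk⟩ := Nat.sInf_mem hne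
  set f := PSDAux.proj u v huv.ne with hf
  have ht0 : (psdStep T)^[psdPt T ↑B] ↑B = Set.univ := Nat.sInf_mem hBf
  have himg : f '' (Set.univ : Set V) = Set.univ := by
    apply Set.eq_univ_of_forall
    rintro ⟨y, hy⟩
    exact ⟨y, trivial, PSDAux.proj_of_ne u v huv.ne hy⟩
  have hforce' : (psdStep (contractEdge T u v))^[psdPt T ↑B] ↑(B.image f) = Set.univ := by
    apply Set.eq_univ_of_univ_subset
    have h1 := PSDAux.image_iterate T u v hT huv ↑B (psdPt T ↑B)
    rw [ht0, himg] at h1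
    rwa [Finset.coe_image]
  have hmem' : (B.image f).card + psdPt (contractEdge T u v) ↑(B.image f) ∈
      {k | ∃ B' : Finset {z : V // z ≠ v}, IsPSDForcing (contractEdge T u v) ↑B' ∧
        k = B'.card + psdPt (contractEdge T u v) ↑B'} :=
    ⟨B.image f, ⟨_, hforce'⟩, rfl⟩
  calc psdTh (contractEdge T u v)
      ≤ (B.image f).card + psdPt (contractEdge T u v) ↑(B.image f) := Nat.sInf_le hmem'
    _ ≤ B.card + psdPt T ↑B :=
        add_le_add Finset.card_image_le (Nat.sInf_le hforce')
    _ = psdTh T := hBk.symm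
end

section
/- Let (T,w) be a finite tree with positive integer vertex weights, let v ∈ V(T) with w(v) = 1, and let T₁,…,Tₘ be pairwise symmetric branches of T at v, with symmetry maps σᵢ carrying V(T₁) onto V(Tᵢ) for i = 2,…,m. Then there exists an optimal set B for (T,w) (i.e., a PSD-forcing set with w(B) + pt₊(T;B) = th₊(T,w)) that is symmetric, meaning B ∩ V(Tᵢ) = σᵢ(B ∩ V(T₁)) for all i = 2,…,m. -/
open SimpleGraph

/-- `C` is a branch of `T` at `v`, i.e. the vertex set of a connected component of `T - v`. -/
def IsBranch {V : Type*} (T : SimpleGraph V) (v : V) (C : Set V) : Prop :=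
  ∃ K : (T.induce {x | x ≠ v}).ConnectedComponent, C = Subtype.val '' K.supp

/-- `σ` is a symmetry map between the branches `C` and `D` of the weighted tree `(T, w)`:
an automorphism of `T` fixing every vertex outside `C ∪ D`, exchanging `C` and `D`,
and preserving the weights. -/
def IsSymmetryMap {V : Type*} (T : SimpleGraph V) (w : V → ℕ) (C D : Set V)
    (σ : T ≃g T) : Prop :=
  (∀ x : V, x ∉ C ∪ D → σ x = x) ∧ ⇑σ '' C = D ∧ ⇑σ '' D = C ∧ ∀ x ∈ C, w (σ x) = w x


section Aux
variable {V : Type*} [DecidableEq V] {T : SimpleGraph V}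

/-- On a tree, a blue vertex forces every white neighbor. -/
lemma tree_psdStep (hT : T.IsTree) (B : Set V) :
    psdStep T B = B ∪ {u | ∃ b ∈ B, T.Adj b u} := by
  ext u
  constructor
  · rintro (h | ⟨b, hb, hadj, -⟩)
    · exact Or.inl h
    · exact Or.inr ⟨b, hb, hadj⟩
  · rintro (h | ⟨b, hb, hadj⟩)
    · exact Or.inl h
    · by_cases hu : u ∈ B
      · exact Or.inl hu
      · refine Or.inr ⟨b, hb, hadj, hu, ?_⟩
        intro u' hu' hadj' hreach
        by_contra hne
        obtain ⟨q⟩ := hreach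
        set q' : T.Walk u' u := q.map (SimpleGraph.Embedding.induce {x | x ∉ B}).toHom with hq'
        have hbsup : b ∉ q'.support := by
          have hs : q'.support = q.support.map (SimpleGraph.Embedding.induce {x | x ∉ B}).toHom :=
            SimpleGraph.Walk.support_map ..
          rw [hs]
          rintro hmem
          obtain ⟨⟨x, hx⟩, -, rfl⟩ := List.mem_map.mp hmem
          exact hx hb
        have hbP : b ∉ (q'.toPath : T.Walk u' u).support :=
          fun h => hbsup (SimpleGraph.Walk.support_toPath_subset _ h)
        have hP2 : (SimpleGraph.Walk.cons hadj'.symm (SimpleGraph.Walk.cons hadj SimpleGraph.Walk.nil)).IsPath := by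
          simp [SimpleGraph.Walk.isPath_def, hne, hadj.ne, hadj'.ne']
        have := hT.IsAcyclic.path_unique q'.toPath ⟨_, hP2⟩
        rw [this] at hbP
        simp at hbP
lemma tree_iterate_psdStep (hT : T.IsTree) (B : Set V) (hB : B.Nonempty) :
    ∀ t, (psdStep T)^[t] B = {u | ∃ b ∈ B, T.dist b u ≤ t} := by
  intro t
  induction t with
  | zero =>
    ext u
    simp only [Function.iterate_zero, id, Set.mem_setOf_eq]
    constructor
    · intro h; exact ⟨u, h, by simp⟩
    · rintro ⟨b, hb, hd⟩
      have hbu : b = u := (hT.isConnected.dist_eq_zero_iff).mp (Nat.le_zero.mp hd)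
      exact hbu ▸ hb
  | succ t ih =>
    rw [Function.iterate_succ_apply', ih, tree_psdStep hT]
    ext u
    simp only [Set.mem_union, Set.mem_setOf_eq]
    constructor
    · rintro (⟨b, hb, hd⟩ | ⟨b', ⟨b, hb, hd⟩, hadj⟩)
      · exact ⟨b, hb, hd.trans (Nat.le_succ t)⟩
      · refine ⟨b, hb, ?_⟩
        have h1 : T.dist b u ≤ T.dist b b' + T.dist b' u := hT.isConnected.dist_triangle
        have h2 : T.dist b' u = 1 := SimpleGraph.dist_eq_one_iff_adj.mpr hadj
        omega
    · rintro ⟨b, hb, hd⟩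
      by_cases h : T.dist b u ≤ t
      · exact Or.inl ⟨b, hb, h⟩
      · right
        have hne : u ≠ b := by
          rintro rfl
          simp [SimpleGraph.dist_self] at h
        obtain ⟨p, hp⟩ := (hT.isConnected b u).exists_walk_length_eq_dist
        obtain ⟨y, hadj, q, hq⟩ := SimpleGraph.Walk.exists_eq_cons_of_ne hne p.reverse
        refine ⟨y, ⟨b, hb, ?_⟩, hadj.symm⟩
        have hlen : T.dist b y ≤ q.length := by
          have : T.dist y b ≤ q.length := SimpleGraph.dist_le q
          rwa [SimpleGraph.dist_comm] at this
        have hql : q.length + 1 = p.length := by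
          have := congrArg SimpleGraph.Walk.length hq
          simp only [SimpleGraph.Walk.length_reverse, SimpleGraph.Walk.length_cons] at this
          omega
        omega

lemma psdPt_le_of_cover (hT : T.IsTree) {B : Set V} (hB : B.Nonempty) {p : ℕ}
    (h : ∀ u, ∃ b ∈ B, T.dist b u ≤ p) : IsPSDForcing T B ∧ psdPt T B ≤ p := by
  have hu : (psdStep T)^[p] B = Set.univ := by
    rw [tree_iterate_psdStep hT B hB]
    exact Set.eq_univ_of_forall fun u => h u
  exact ⟨⟨p, hu⟩, Nat.sInf_le hu⟩

lemma cover_of_psdPt (hT : T.IsTree) {B : Set V} (hB : B.Nonempty)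
    (hf : IsPSDForcing T B) : ∀ u, ∃ b ∈ B, T.dist b u ≤ psdPt T B := by
  have hmem : (psdStep T)^[psdPt T B] B = Set.univ := Nat.sInf_mem hf
  rw [tree_iterate_psdStep hT B hB] at hmem
  intro u
  exact Set.eq_univ_iff_forall.mp hmem u

lemma nonempty_of_forcing [Nonempty V] (hT : T.IsTree) {B : Set V}
    (hf : IsPSDForcing T B) : B.Nonempty := by
  rw [Set.nonempty_iff_ne_empty]
  rintro rfl
  have hstep : ∀ t, (psdStep T)^[t] (∅ : Set V) = ∅ := by
    intro t
    induction t with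
    | zero => rfl
    | succ t ih => rw [Function.iterate_succ_apply', ih, tree_psdStep hT]; simp [psdForces]
  obtain ⟨t, ht⟩ := hf
  rw [hstep t] at ht
  exact Set.empty_ne_univ ht

lemma iso_dist (hT : T.Connected) (φ : T ≃g T) (x y : V) :
    T.dist (φ x) (φ y) = T.dist x y := by
  have h1 : ∀ (ψ : T ≃g T) (a b : V), T.dist (ψ a) (ψ b) ≤ T.dist a b := by
    intro ψ a b
    obtain ⟨p, hp⟩ := (hT a b).exists_walk_length_eq_dist
    calc T.dist (ψ a) (ψ b) ≤ (p.map ψ.toHom).length := SimpleGraph.dist_le _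
      _ = p.length := by simp
      _ = T.dist a b := hp
  refine le_antisymm (h1 φ x y) ?_
  have := h1 φ.symm (φ x) (φ y)
  simpa using this

lemma branch_ne {v : V} {Cs : Set V} (hb : IsBranch T v Cs) : ∀ x ∈ Cs, x ≠ v := by
  obtain ⟨K, rfl⟩ := hb
  rintro x ⟨⟨x', hx'⟩, -, rfl⟩
  exact hx'

lemma branch_closed {v : V} {Cs : Set V} (hb : IsBranch T v Cs) {x z : V}
    (hx : x ∈ Cs) (hadj : T.Adj x z) (hz : z ≠ v) : z ∈ Cs := by
  obtain ⟨K, rfl⟩ := hb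
  obtain ⟨⟨x', hx'⟩, hxK, rfl⟩ := hx
  refine ⟨⟨z, hz⟩, ?_, rfl⟩
  rw [SimpleGraph.ConnectedComponent.mem_supp_iff] at hxK ⊢
  rw [← hxK]
  apply SimpleGraph.ConnectedComponent.sound
  refine SimpleGraph.Adj.reachable ?_
  simp only [SimpleGraph.comap_adj, Function.Embedding.coe_subtype]
  exact hadj.symm

lemma walk_support_in_branch {v : V} {Cs : Set V} (hb : IsBranch T v Cs) :
    ∀ {x y : V} (p : T.Walk x y), x ∈ Cs → (∀ z ∈ p.support, z ≠ v) → y ∈ Cs := by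
  intro x y p
  induction p with
  | nil => intro h _; exact h
  | @cons a b c hadj q ih =>
    intro hx hsup
    apply ih
    · exact branch_closed hb hx hadj (hsup _ (by simp))
    · intro z hz
      exact hsup z (by simp [hz])

lemma dist_split (hT : T.IsTree) {v : V} {Cs : Set V} (hb : IsBranch T v Cs) {x y : V}
    (hx : x ∈ Cs) (hy : y ∉ Cs) : T.dist x y = T.dist x v + T.dist v y := by
  refine le_antisymm hT.isConnected.dist_triangle ?_
  obtain ⟨p, hp⟩ := (hT.isConnected x y).exists_walk_length_eq_dist
  have hv : v ∈ p.support := by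
    by_contra hvp
    exact hy (walk_support_in_branch hb p hx (fun z hz h => hvp (h ▸ hz)))
  calc T.dist x v + T.dist v y
      ≤ (p.takeUntil v hv).length + (p.dropUntil v hv).length :=
        Nat.add_le_add (SimpleGraph.dist_le _) (SimpleGraph.dist_le _)
    _ = p.length := by
        rw [← SimpleGraph.Walk.length_append]
        exact congrArg SimpleGraph.Walk.length (p.take_spec hv)
    _ = T.dist x y := hp

end Aux

/-- If `(T,w)` is a positive-integer weighted finite tree, `v ∈ V(T)` has `w(v) = 1`, and
`C 0, …, C (m-1)` are pairwise symmetric branches of `T` at `v` with symmetry maps `σ i`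
carrying `C 0` onto `C i`, then there is an optimal set `B` for `(T,w)` that is symmetric:
`B ∩ C i = σ i '' (B ∩ C 0)` for every `i ≠ 0`. -/
theorem stmt3 {V : Type*} [Fintype V] [DecidableEq V] (T : SimpleGraph V) (hT : T.IsTree)
    (w : V → ℕ) (hw : ∀ x, 0 < w x) (v : V) (hv : w v = 1)
    (m : ℕ) (hm : 0 < m) (C : Fin m → Set V)
    (hbranch : ∀ i, IsBranch T v (C i)) (hinj : Function.Injective C)
    (σ : Fin m → (T ≃g T))
    (hσ : ∀ i, i ≠ ⟨0, hm⟩ → IsSymmetryMap T w (C ⟨0, hm⟩) (C i) (σ i)) :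
    ∃ B : Finset V, IsPSDForcing T ↑B ∧
      (∑ x ∈ B, w x) + psdPt T ↑B = psdThW T w ∧
      ∀ i, i ≠ ⟨0, hm⟩ → ↑B ∩ C i = ⇑(σ i) '' (↑B ∩ C ⟨0, hm⟩) := by
  classical
  have hconn := hT.isConnected
  have : Nonempty V := ⟨v⟩
  set i0 : Fin m := ⟨0, hm⟩ with hi0def
  -- an optimal set B₀
  have hSne : {k | ∃ B : Finset V, IsPSDForcing T ↑B ∧
      k = (∑ x ∈ B, w x) + psdPt T ↑B}.Nonempty := by
    have huf : IsPSDForcing T ↑(Finset.univ : Finset V) := by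
      refine ⟨0, ?_⟩
      simp only [Function.iterate_zero, id_eq, Finset.coe_univ]
    exact ⟨(∑ x ∈ (Finset.univ : Finset V), w x) + psdPt T ↑(Finset.univ : Finset V),
      Finset.univ, huf, rfl⟩
  obtain ⟨B₀, hB₀f, hB₀eq⟩ : psdThW T w ∈ _ := Nat.sInf_mem hSne
  have hB₀ne : (↑B₀ : Set V).Nonempty := nonempty_of_forcing hT hB₀f
  set p := psdPt T ↑B₀ with hpdef
  have cov : ∀ u, ∃ b ∈ B₀, T.dist b u ≤ p := by
    intro u
    obtain ⟨b, hb, hd⟩ := cover_of_psdPt hT hB₀ne hB₀f u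
    exact ⟨b, hb, hd⟩
  -- basic branch facts
  have hvC : ∀ i, v ∉ C i := fun i hvi => branch_ne (hbranch i) v hvi rfl
  have hdisj : ∀ i k, i ≠ k → ∀ x, x ∈ C i → x ∉ C k := by
    intro i k hik x hxi hxk
    obtain ⟨Ki, hKi⟩ := hbranch i
    obtain ⟨Kk, hKk⟩ := hbranch k
    apply hik; apply hinj
    rw [hKi, hKk]
    rw [hKi] at hxi; rw [hKk] at hxk
    obtain ⟨x1, hx1, hx1e⟩ := hxi
    obtain ⟨x2, hx2, hx2e⟩ := hxk
    have hx12 : x1 = x2 := Subtype.ext (by rw [hx1e, hx2e])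
    rw [SimpleGraph.ConnectedComponent.mem_supp_iff] at hx1 hx2
    rw [← hx1, hx12, hx2]
  -- the normalized symmetry maps
  set τ : Fin m → (T ≃g T) := fun i => if i = i0 then RelIso.refl T.Adj else σ i with hτdef
  have hτne : ∀ i, i ≠ i0 → τ i = σ i := by
    intro i hi; rw [hτdef]; simp [hi]
  have hτ0 : ∀ x, τ i0 x = x := by
    intro x; rw [hτdef]; simp
  have hτfix : ∀ i x, x ∉ C i0 → x ∉ C i → τ i x = x := by
    intro i x h0 hi
    by_cases hii : i = i0
    · subst hii; exact hτ0 x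
    · rw [hτne i hii]
      exact (hσ i hii).1 x (by rintro (h | h) <;> [exact h0 h; exact hi h])
  have hτv : ∀ i, τ i v = v := fun i => hτfix i v (hvC i0) (hvC i)
  have hτC0 : ∀ i, ∀ x ∈ C i0, τ i x ∈ C i := by
    intro i x hx
    by_cases hii : i = i0
    · subst hii; rw [hτ0]; exact hx
    · rw [hτne i hii]
      rw [← (hσ i hii).2.1]
      exact Set.mem_image_of_mem _ hx
  have hτCi : ∀ i, ∀ x ∈ C i, (τ i).symm x ∈ C i0 := by
    intro i x hx
    by_cases hii : i = i0
    · subst hii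
      have : (τ i0).symm x = x := by rw [hτdef]; simp only [if_pos rfl]; rfl
      rw [this]; exact hx
    · rw [hτne i hii]
      rw [← (hσ i hii).2.1] at hx
      obtain ⟨y, hy, hyx⟩ := hx
      have : (σ i).symm x = y := by rw [← hyx]; exact (σ i).symm_apply_apply y
      rw [this]; exact hy
  have hτw0 : ∀ i, ∀ x ∈ C i0, w (τ i x) = w x := by
    intro i x hx
    by_cases hii : i = i0
    · subst hii; rw [hτ0]
    · rw [hτne i hii]; exact (hσ i hii).2.2.2 x hx
  have hτwi : ∀ i, ∀ x ∈ C i, w ((τ i).symm x) = w x := by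
    intro i x hx
    have h1 : (τ i).symm x ∈ C i0 := hτCi i x hx
    have h2 : w (τ i ((τ i).symm x)) = w ((τ i).symm x) := hτw0 i _ h1
    rw [(τ i).apply_symm_apply] at h2
    exact h2.symm
  -- Finset decomposition of B₀
  set Bc : Fin m → Finset V := fun k => B₀.filter (· ∈ C k) with hBcdef
  set Bext : Finset V := B₀.filter (fun x => ∀ k, x ∉ C k) with hBextdef
  set Wt : Fin m → ℕ := fun k => ∑ x ∈ Bc k, w x with hWtdef
  have hBcC : ∀ k, ∀ x ∈ Bc k, x ∈ C k := by
    intro k x hx; rw [hBcdef] at hx; exact (Finset.mem_filter.mp hx).2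
  have hBcB : ∀ k, ∀ x ∈ Bc k, x ∈ B₀ := by
    intro k x hx; rw [hBcdef] at hx; exact (Finset.mem_filter.mp hx).1
  have hB₀split : B₀ = Bext ∪ Finset.univ.biUnion Bc := by
    ext x
    simp only [Finset.mem_union, Finset.mem_biUnion, Finset.mem_univ, true_and,
      hBextdef, hBcdef, Finset.mem_filter]
    constructor
    · intro hx
      by_cases h : ∃ k, x ∈ C k
      · obtain ⟨k, hk⟩ := h; exact Or.inr ⟨k, hx, hk⟩
      · push_neg at h; exact Or.inl ⟨hx, h⟩
    · rintro (⟨h, -⟩ | ⟨k, h, -⟩) <;> exact h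
  have hdisjE : Disjoint Bext (Finset.univ.biUnion Bc) := by
    rw [Finset.disjoint_left]
    intro x hx hx'
    rw [hBextdef, Finset.mem_filter] at hx
    rw [Finset.mem_biUnion] at hx'
    obtain ⟨k, -, hk⟩ := hx'
    exact hx.2 k (hBcC k x hk)
  have hpwBc : (↑(Finset.univ : Finset (Fin m)) : Set (Fin m)).PairwiseDisjoint Bc := by
    intro a _ b _ hab
    rw [Function.onFun, Finset.disjoint_left]
    intro x hx hx'
    exact hdisj a b hab x (hBcC a x hx) (hBcC b x hx')
  have hB₀sum : ∑ x ∈ B₀, w x = (∑ x ∈ Bext, w x) + ∑ k, Wt k := by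
    rw [hB₀split, Finset.sum_union hdisjE, Finset.sum_biUnion hpwBc]
  -- the candidate sets
  set P : Fin m → Finset V := fun j => (Bc j).image (fun x => (τ j).symm x) with hPdef
  set cp : Fin m → Fin m → Finset V := fun j i => (P j).image (τ i) with hcpdef
  set BJ : Fin m → Finset V := fun j => Bext ∪ Finset.univ.biUnion (cp j) with hBJdef
  have hPC0 : ∀ j, ∀ x ∈ P j, x ∈ C i0 := by
    intro j x hx
    rw [hPdef] at hx
    obtain ⟨b, hb, rfl⟩ := Finset.mem_image.mp hx
    exact hτCi j b (hBcC j b hb)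
  have hcpC : ∀ j i, ∀ x ∈ cp j i, x ∈ C i := by
    intro j i x hx
    rw [hcpdef] at hx
    obtain ⟨y, hy, rfl⟩ := Finset.mem_image.mp hx
    exact hτC0 i y (hPC0 j y hy)
  have hPsum : ∀ j, ∑ x ∈ P j, w x = Wt j := by
    intro j
    rw [hPdef, Finset.sum_image (fun x _ y _ h => by exact (τ j).symm.toEquiv.injective h)]
    exact Finset.sum_congr rfl fun b hb => hτwi j b (hBcC j b hb)
  have hWcp : ∀ j i, ∑ x ∈ cp j i, w x = Wt j := by
    intro j i
    rw [hcpdef, Finset.sum_image (fun x _ y _ h => by exact (τ i).toEquiv.injective h)]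
    rw [← hPsum j]
    exact Finset.sum_congr rfl fun x hx => hτw0 i x (hPC0 j x hx)
  have hdisjE' : ∀ j, Disjoint Bext (Finset.univ.biUnion (cp j)) := by
    intro j
    rw [Finset.disjoint_left]
    intro x hx hx'
    rw [hBextdef, Finset.mem_filter] at hx
    rw [Finset.mem_biUnion] at hx'
    obtain ⟨k, -, hk⟩ := hx'
    exact hx.2 k (hcpC j k x hk)
  have hpwcp : ∀ j, (↑(Finset.univ : Finset (Fin m)) : Set (Fin m)).PairwiseDisjoint (cp j) := by
    intro j a _ b _ hab
    rw [Function.onFun, Finset.disjoint_left]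
    intro x hx hx'
    exact hdisj a b hab x (hcpC j a x hx) (hcpC j b x hx')
  have hBJsum : ∀ j, ∑ x ∈ BJ j, w x = (∑ x ∈ Bext, w x) + m * Wt j := by
    intro j
    rw [hBJdef]
    rw [Finset.sum_union (hdisjE' j), Finset.sum_biUnion (hpwcp j)]
    congr 1
    rw [Finset.sum_congr rfl (fun i _ => hWcp j i), Finset.sum_const, Finset.card_univ,
      Fintype.card_fin, smul_eq_mul]
  have hvBJ : v ∉ B₀ → ∀ j, v ∉ BJ j := by
    intro hvB j hvj
    rw [hBJdef, Finset.mem_union] at hvj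
    rcases hvj with h | h
    · rw [hBextdef, Finset.mem_filter] at h
      exact hvB h.1
    · rw [Finset.mem_biUnion] at h
      obtain ⟨k, -, hk⟩ := h
      exact hvC k (hcpC j k v hk)
  have hcpBJ : ∀ j i, ∀ x ∈ cp j i, x ∈ BJ j := by
    intro j i x hx
    rw [hBJdef, Finset.mem_union]
    exact Or.inr (Finset.mem_biUnion.mpr ⟨i, Finset.mem_univ i, hx⟩)
  have hBJCi : ∀ j i, (↑(BJ j) : Set V) ∩ C i = ↑(cp j i) := by
    intro j i
    ext x
    simp only [Set.mem_inter_iff, Finset.mem_coe]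
    constructor
    · rintro ⟨hxBJ, hxCi⟩
      rw [hBJdef, Finset.mem_union] at hxBJ
      rcases hxBJ with h | h
      · rw [hBextdef, Finset.mem_filter] at h
        exact absurd hxCi (h.2 i)
      · rw [Finset.mem_biUnion] at h
        obtain ⟨k, -, hk⟩ := h
        by_cases hki : k = i
        · subst hki; exact hk
        · exact absurd hxCi (hdisj k i hki x (hcpC j k x hk))
    · intro hx
      exact ⟨hcpBJ j i x hx, hcpC j i x hx⟩
  have hcpi0 : ∀ j, (↑(cp j i0) : Set V) = ↑(P j) := by
    intro j
    rw [hcpdef]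
    simp only
    rw [Finset.image_congr (g := id) (fun x _ => hτ0 x), Finset.image_id]
  have hsymBJ : ∀ j i, i ≠ i0 →
      (↑(BJ j) : Set V) ∩ C i = ⇑(σ i) '' ((↑(BJ j) : Set V) ∩ C i0) := by
    intro j i hi
    rw [hBJCi j i, hBJCi j i0, hcpi0 j, hcpdef]
    simp only
    rw [← hτne i hi, Finset.coe_image]
  -- mirror distance facts
  have hmirror_v : ∀ (i : Fin m) (x : V), T.dist v (τ i x) = T.dist v x := by
    intro i x
    conv_lhs => rw [← hτv i]
    exact iso_dist hconn (τ i) v x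
  have hmirror_vs : ∀ (i : Fin m) (x : V), T.dist v ((τ i).symm x) = T.dist v x := by
    intro i x
    conv_rhs => rw [← (τ i).apply_symm_apply x]
    exact (hmirror_v i ((τ i).symm x)).symm
  have hmirror2 : ∀ (i j : Fin m) (x u : V),
      T.dist (τ i ((τ j).symm x)) u = T.dist x (τ j ((τ i).symm u)) := by
    intro i j x u
    have e1 : T.dist (τ i ((τ j).symm x)) u
        = T.dist ((τ j).symm x) ((τ i).symm u) := by
      conv_lhs => rw [← (τ i).apply_symm_apply u]
      exact iso_dist hconn (τ i) _ _
    have e2 : T.dist x (τ j ((τ i).symm u))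
        = T.dist ((τ j).symm x) ((τ i).symm u) := by
      conv_lhs => rw [← (τ j).apply_symm_apply x]
      exact iso_dist hconn (τ j) _ _
    rw [e1, e2]
  -- the common finishing step
  have finish : ∀ (B' : Finset V), (∀ u, ∃ b ∈ B', T.dist b u ≤ p) →
      (∑ x ∈ B', w x) ≤ (∑ x ∈ B₀, w x) →
      (∀ i, i ≠ i0 → (↑B' : Set V) ∩ C i = ⇑(σ i) '' ((↑B' : Set V) ∩ C i0)) →
      ∃ B : Finset V, IsPSDForcing T ↑B ∧
        (∑ x ∈ B, w x) + psdPt T ↑B = psdThW T w ∧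
        ∀ i, i ≠ i0 → ↑B ∩ C i = ⇑(σ i) '' (↑B ∩ C i0) := by
    intro B' hcov hwle hsymm
    have hne : (↑B' : Set V).Nonempty := by
      obtain ⟨b, hb, -⟩ := hcov v
      exact ⟨b, hb⟩
    obtain ⟨hforce, hptle⟩ := psdPt_le_of_cover hT hne
      (fun u => by obtain ⟨b, hb, hd⟩ := hcov u; exact ⟨b, hb, hd⟩)
    have hth_le : psdThW T w ≤ (∑ x ∈ B', w x) + psdPt T ↑B' :=
      Nat.sInf_le ⟨B', hforce, rfl⟩
    have hle : (∑ x ∈ B', w x) + psdPt T ↑B' ≤ psdThW T w := by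
      rw [hB₀eq]
      omega
    exact ⟨B', hforce, le_antisymm hle hth_le, hsymm⟩
  have dcomm : ∀ a b : V, T.dist a b = T.dist b a := fun a b => SimpleGraph.dist_comm
  have hmemBc : ∀ (k : Fin m) (b : V), b ∈ B₀ → b ∈ C k → b ∈ Bc k := by
    intro k b h1 h2
    rw [hBcdef]
    exact Finset.mem_filter.mpr ⟨h1, h2⟩
  have hmemcp : ∀ (j i : Fin m) (b : V), b ∈ Bc j → τ i ((τ j).symm b) ∈ cp j i := by
    intro j i b hb
    rw [hcpdef]
    refine Finset.mem_image.mpr ⟨(τ j).symm b, ?_, rfl⟩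
    rw [hPdef]
    exact Finset.mem_image.mpr ⟨b, hb, rfl⟩
  have hmemBext : ∀ b ∈ B₀, (∀ k, b ∉ C k) → b ∈ Bext := by
    intro b hb h
    rw [hBextdef]
    exact Finset.mem_filter.mpr ⟨hb, h⟩
  have hBextBJ : ∀ j, ∀ b ∈ Bext, b ∈ BJ j := by
    intro j b hb
    rw [hBJdef]
    exact Finset.mem_union.mpr (Or.inl hb)
  -- coverage argument when v is blue
  have coverI : ∀ (j : Fin m) (B' : Finset V), (∀ x ∈ BJ j, x ∈ B') → v ∈ B' →
      ∀ u, ∃ b ∈ B', T.dist b u ≤ p := by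
    intro j B' hsub hvB' u
    by_cases hu : ∃ i, u ∈ C i
    · obtain ⟨i, hui⟩ := hu
      set u' := τ j ((τ i).symm u) with hu'def
      have hu'Cj : u' ∈ C j := hτC0 j _ (hτCi i u hui)
      obtain ⟨bs, hbs, hds⟩ := cov u'
      by_cases hbj : bs ∈ C j
      · refine ⟨τ i ((τ j).symm bs),
          hsub _ (hcpBJ j i _ (hmemcp j i bs (hmemBc j bs hbs hbj))), ?_⟩
        rw [hmirror2 i j bs u, ← hu'def]
        exact hds
      · refine ⟨v, hvB', ?_⟩
        have hsp : T.dist u' bs = T.dist u' v + T.dist v bs :=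
          dist_split hT (hbranch j) hu'Cj hbj
        have h1 : T.dist v u' = T.dist v u := by
          rw [hu'def, hmirror_v j, hmirror_vs i]
        have h2 := dcomm bs u'
        have h3 := dcomm u' v
        omega
    · push_neg at hu
      obtain ⟨b, hb, hd⟩ := cov u
      by_cases hbC : ∃ k, b ∈ C k
      · obtain ⟨k, hbk⟩ := hbC
        refine ⟨v, hvB', ?_⟩
        have hsp : T.dist b u = T.dist b v + T.dist v u :=
          dist_split hT (hbranch k) hbk (hu k)
        omega
      · push_neg at hbC
        exact ⟨b, hsub b (hBextBJ j b (hmemBext b hb hbC)), hd⟩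
  -- case analysis
  by_cases hm1 : m = 1
  · refine finish B₀ cov le_rfl ?_
    intro i hi
    exfalso
    apply hi
    have h1 : (i : ℕ) < m := i.isLt
    rw [hi0def]
    exact Fin.ext (by omega)
  have hm2 : 1 < m := by omega
  obtain ⟨jw, -, hjw'⟩ := Finset.exists_min_image Finset.univ Wt ⟨i0, Finset.mem_univ i0⟩
  have hjw : ∀ k, Wt jw ≤ Wt k := fun k => hjw' k (Finset.mem_univ k)
  have hconstsum : ∀ c : ℕ, (∑ _k : Fin m, c) = m * c := by
    intro c
    rw [Finset.sum_const, Finset.card_univ, Fintype.card_fin, smul_eq_mul]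
  by_cases hvB : v ∈ B₀
  · -- case A : v is blue in B₀
    refine finish (BJ jw) (coverI jw (BJ jw) (fun x hx => hx)
      (hBextBJ jw v (hmemBext v hvB (fun k => hvC k)))) ?_ (hsymBJ jw)
    rw [hBJsum jw, hB₀sum]
    have h1 : m * Wt jw ≤ ∑ k, Wt k := by
      rw [← hconstsum (Wt jw)]
      exact Finset.sum_le_sum (fun k _ => hjw k)
    omega
  · by_cases hall : ∀ k, Wt k = Wt jw
    · by_cases hem : Bc jw = ∅
      · -- case C1 : B₀ avoids all the branches
        have hBce : ∀ k, Bc k = ∅ := by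
          intro k
          rw [← Finset.not_nonempty_iff_eq_empty]
          rintro ⟨x, hx⟩
          have h1 : 0 < Wt k := by
            rw [hWtdef]
            exact lt_of_lt_of_le (hw x) (Finset.single_le_sum (fun y _ => Nat.zero_le (w y)) hx)
          rw [hall k] at h1
          simp only [hWtdef, hem, Finset.sum_empty] at h1
          omega
        refine finish B₀ cov le_rfl ?_
        have hBe : ∀ i, (↑B₀ : Set V) ∩ C i = ∅ := by
          intro i
          ext x
          simp only [Set.mem_inter_iff, Finset.mem_coe, Set.mem_empty_iff_false, iff_false]
          rintro ⟨hx1, hx2⟩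
          have h2 : x ∈ Bc i := hmemBc i x hx1 hx2
          rw [hBce i] at h2
          exact absurd h2 (Finset.notMem_empty x)
        intro i hi
        rw [hBe i, hBe i0, Set.image_empty]
      · -- case C2 : all branch weights equal and nonzero
        have hBcne : ∀ k, (Bc k).Nonempty := by
          intro k
          rw [Finset.nonempty_iff_ne_empty]
          intro hk
          obtain ⟨x, hx⟩ := Finset.nonempty_iff_ne_empty.mpr hem
          have h1 : 0 < Wt jw := by
            rw [hWtdef]
            exact lt_of_lt_of_le (hw x) (Finset.single_le_sum (fun y _ => Nat.zero_le (w y)) hx)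
          rw [← hall k] at h1
          simp only [hWtdef, hk, Finset.sum_empty] at h1
          omega
        have hck : ∀ k, ∃ cc ∈ Bc k, ∀ b ∈ Bc k, T.dist v cc ≤ T.dist v b :=
          fun k => Finset.exists_min_image (Bc k) (fun b => T.dist v b) (hBcne k)
        choose c hc1 hc2 using hck
        obtain ⟨jj, -, hjj'⟩ := Finset.exists_min_image Finset.univ
          (fun k => T.dist v (c k)) ⟨i0, Finset.mem_univ i0⟩
        have hjj : ∀ k, T.dist v (c jj) ≤ T.dist v (c k) := fun k => hjj' k (Finset.mem_univ k)
        have hcmem : c jj ∈ BJ jj := by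
          have h1 := hmemcp jj jj (c jj) (hc1 jj)
          rw [(τ jj).apply_symm_apply] at h1
          exact hcpBJ jj jj _ h1
        have hcC : c jj ∈ C jj := hBcC jj _ (hc1 jj)
        have coverII : ∀ u, ∃ b ∈ BJ jj, T.dist b u ≤ p := by
          intro u
          by_cases hu : ∃ i, u ∈ C i
          · obtain ⟨i, hui⟩ := hu
            set u' := τ jj ((τ i).symm u) with hu'def
            have hu'Cj : u' ∈ C jj := hτC0 jj _ (hτCi i u hui)
            have hvu' : T.dist v u' = T.dist v u := by
              rw [hu'def, hmirror_v jj, hmirror_vs i]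
            obtain ⟨bs, hbs, hds⟩ := cov u'
            by_cases hbj : bs ∈ C jj
            · refine ⟨τ i ((τ jj).symm bs),
                hcpBJ jj i _ (hmemcp jj i bs (hmemBc jj bs hbs hbj)), ?_⟩
              rw [hmirror2 i jj bs u, ← hu'def]
              exact hds
            · by_cases hbC : ∃ l, bs ∈ C l
              · obtain ⟨l, hbl⟩ := hbC
                have hlj : l ≠ jj := by
                  rintro rfl
                  exact hbj hbl
                set i'' : Fin m := if i = i0 then (⟨1, hm2⟩ : Fin m) else i0 with hi''def
                have hi''ne : i'' ≠ i := by
                  rw [hi''def]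
                  by_cases hii : i = i0
                  · rw [if_pos hii, hii]
                    intro h
                    have := congrArg Fin.val h
                    rw [hi0def] at this
                    simp at this
                  · rw [if_neg hii]
                    exact fun h => hii h.symm
                set b' := τ i'' ((τ jj).symm (c jj)) with hb'def
                have hb'mem : b' ∈ BJ jj := hcpBJ jj i'' _ (hmemcp jj i'' (c jj) (hc1 jj))
                have hb'C : b' ∈ C i'' := hcpC jj i'' _ (hmemcp jj i'' (c jj) (hc1 jj))
                have hunotCi'' : u ∉ C i'' := hdisj i i'' (fun h => hi''ne h.symm) u hui
                have e1 : T.dist b' u = T.dist b' v + T.dist v u :=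
                  dist_split hT (hbranch i'') hb'C hunotCi''
                have e2 : T.dist v b' = T.dist v (c jj) := by
                  rw [hb'def, hmirror_v i'', hmirror_vs jj]
                have e3 : T.dist v (c jj) ≤ T.dist v (c l) := hjj l
                have e4 : T.dist v (c l) ≤ T.dist v bs := hc2 l bs (hmemBc l bs hbs hbl)
                have e5 : T.dist bs u' = T.dist bs v + T.dist v u' :=
                  dist_split hT (hbranch l) hbl
                    (fun h => hlj (False.elim (hdisj l jj (fun hh => hlj hh) u' h hu'Cj)))
                have e6 := dcomm b' v
                have e7 := dcomm bs v
                exact ⟨b', hb'mem, by omega⟩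
              · push_neg at hbC
                refine ⟨bs, hBextBJ jj bs (hmemBext bs hbs hbC), ?_⟩
                have e1 : T.dist u bs = T.dist u v + T.dist v bs :=
                  dist_split hT (hbranch i) hui (hbC i)
                have e2 : T.dist u' bs = T.dist u' v + T.dist v bs :=
                  dist_split hT (hbranch jj) hu'Cj (hbC jj)
                have e3 := dcomm bs u
                have e4 := dcomm u v
                have e5 := dcomm bs u'
                have e6 := dcomm u' v
                omega
          · push_neg at hu
            obtain ⟨b, hb, hd⟩ := cov u
            by_cases hbC : ∃ k, b ∈ C k
            · obtain ⟨k, hbk⟩ := hbC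
              refine ⟨c jj, hcmem, ?_⟩
              have e1 : T.dist (c jj) u = T.dist (c jj) v + T.dist v u :=
                dist_split hT (hbranch jj) hcC (hu jj)
              have e2 : T.dist b u = T.dist b v + T.dist v u :=
                dist_split hT (hbranch k) hbk (hu k)
              have e3 : T.dist v (c jj) ≤ T.dist v (c k) := hjj k
              have e4 : T.dist v (c k) ≤ T.dist v b := hc2 k b (hmemBc k b hb hbk)
              have e5 := dcomm (c jj) v
              have e6 := dcomm b v
              omega
            · push_neg at hbC
              exact ⟨b, hBextBJ jj b (hmemBext b hb hbC), hd⟩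
        refine finish (BJ jj) coverII ?_ (hsymBJ jj)
        rw [hBJsum jj, hB₀sum]
        have h1 : m * Wt jj = ∑ k, Wt k := by
          rw [Finset.sum_congr rfl (fun k _ => hall k), hconstsum, ← hall jj]
        omega
    · -- case B : strict weight slack, add v
      push_neg at hall
      obtain ⟨k0, hk0⟩ := hall
      have hvnot : v ∉ BJ jw := hvBJ hvB jw
      have hins : ∀ i, (↑(insert v (BJ jw)) : Set V) ∩ C i = (↑(BJ jw) : Set V) ∩ C i := by
        intro i
        rw [Finset.coe_insert]
        ext x
        simp only [Set.mem_inter_iff, Set.mem_insert_iff, Finset.mem_coe]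
        constructor
        · rintro ⟨(rfl | hx), hxc⟩
          · exact absurd hxc (hvC i)
          · exact ⟨hx, hxc⟩
        · rintro ⟨hx, hxc⟩
          exact ⟨Or.inr hx, hxc⟩
      refine finish (insert v (BJ jw))
        (coverI jw _ (fun x hx => Finset.mem_insert_of_mem hx) (Finset.mem_insert_self v _))
        ?_ ?_
      · rw [Finset.sum_insert hvnot, hBJsum jw, hB₀sum, hv]
        have hlt : (∑ _k : Fin m, Wt jw) < ∑ k, Wt k :=
          Finset.sum_lt_sum (fun k _ => hjw k)
            ⟨k0, Finset.mem_univ k0, lt_of_le_of_ne (hjw k0) (Ne.symm hk0)⟩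
        rw [hconstsum] at hlt
        omega
      · intro i hi
        rw [hins i, hins i0]
        exact hsymBJ jw i hi
end

section
/- Let (T,w) be a finite tree with positive integer vertex weights, let v ∈ V(T) with w(v) = 1, and let T₁,…,Tₘ be a maximal set of pairwise symmetric branches of T at v. Let (T',w') be the single concentration of T at v: T' = T − (V(T₂) ∪ ⋯ ∪ V(Tₘ)), with w'(x) = m·w(x) for x ∈ V(T₁) and w'(x) = w(x) otherwise. Then th₊(T,w) = th₊(T',w'). -/
open SimpleGraph

namespace PSDAux

variable {V : Type*} {G : SimpleGraph V}

lemma subset_psdStep (B : Set V) : B ⊆ psdStep G B := Set.subset_union_left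

lemma mem_psdStep_iff {B : Set V} {x : V} :
    x ∈ psdStep G B ↔ x ∈ B ∨ ∃ u, psdForces G B u x := Iff.rfl

/-- hom between induced subgraphs along an inclusion. -/
def inclHom {W W' : Set V} (h : W ⊆ W') : G.induce W →g G.induce W' where
  toFun x := ⟨x.1, h x.2⟩
  map_rel' := fun hadj => hadj

lemma reach_mono {W W' : Set V} (h : W ⊆ W') {a b : ↥W}
    (hr : (G.induce W).Reachable a b) :
    (G.induce W').Reachable ⟨a.1, h a.2⟩ ⟨b.1, h b.2⟩ :=
  hr.map (inclHom h)

lemma psdForces_mono {B D : Set V} (h : B ⊆ D) {u x : V}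
    (hf : psdForces G B u x) (hx : x ∉ D) : psdForces G D u x := by
  obtain ⟨h1, h2, hw, h4⟩ := hf
  refine ⟨h h1, h2, hx, fun u' hu' hadj hreach => ?_⟩
  have hsub : {y : V | y ∉ D} ⊆ {y : V | y ∉ B} := fun y hy hc => hy (h hc)
  exact h4 u' (fun c => hu' (h c)) hadj (reach_mono hsub hreach)

lemma psdStep_mono {B D : Set V} (h : B ⊆ D) : psdStep G B ⊆ psdStep G D := by
  intro x hx
  rcases hx with hx | ⟨u, hu⟩
  · exact subset_psdStep D (h hx)
  · by_cases hxD : x ∈ D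
    · exact subset_psdStep D hxD
    · exact Or.inr ⟨u, psdForces_mono h hu hxD⟩

lemma iter_mono {B D : Set V} (h : B ⊆ D) (t : ℕ) :
    (psdStep G)^[t] B ⊆ (psdStep G)^[t] D := by
  induction t generalizing B D with
  | zero => exact h
  | succ t ih =>
    rw [Function.iterate_succ_apply, Function.iterate_succ_apply]
    exact ih (psdStep_mono h)

lemma subset_iter (B : Set V) (k : ℕ) : B ⊆ (psdStep G)^[k] B := by
  induction k with
  | zero => exact fun x hx => hx
  | succ k ih =>
    rw [Function.iterate_succ_apply']
    exact fun x hx => subset_psdStep _ (ih hx)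

lemma iter_le_iter {B : Set V} {s t : ℕ} (h : s ≤ t) :
    (psdStep G)^[s] B ⊆ (psdStep G)^[t] B := by
  obtain ⟨k, rfl⟩ := Nat.exists_eq_add_of_le h
  rw [Nat.add_comm, Function.iterate_add_apply]
  exact subset_iter _ k

lemma iter_univ_of {B : Set V} {s t : ℕ} (h : s ≤ t)
    (hs : (psdStep G)^[s] B = Set.univ) : (psdStep G)^[t] B = Set.univ :=
  Set.eq_univ_of_univ_subset (hs ▸ iter_le_iter h)

lemma psdPt_le {B : Set V} {t : ℕ} (h : (psdStep G)^[t] B = Set.univ) :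
    psdPt G B ≤ t := Nat.sInf_le h

lemma iter_psdPt {B : Set V} (hB : IsPSDForcing G B) :
    (psdStep G)^[psdPt G B] B = Set.univ := Nat.sInf_mem hB

lemma forcing_mono {B D : Set V} (h : B ⊆ D) (hB : IsPSDForcing G B) :
    IsPSDForcing G D := by
  obtain ⟨t, ht⟩ := hB
  exact ⟨t, Set.eq_univ_of_univ_subset (ht ▸ iter_mono h t)⟩

lemma psdPt_mono {B D : Set V} (h : B ⊆ D) (hB : IsPSDForcing G B) :
    psdPt G D ≤ psdPt G B := by
  apply psdPt_le
  apply Set.eq_univ_of_univ_subset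
  have h2 := iter_mono (G := G) h (psdPt G B)
  rw [iter_psdPt hB] at h2
  exact h2

variable {V : Type*} {G : SimpleGraph V}

/-- hom between induced subgraphs along a graph hom. -/
def indHom (f : G →g G) (W W' : Set V) (hW : ∀ x ∈ W, f x ∈ W') :
    G.induce W →g G.induce W' where
  toFun x := ⟨f x.1, hW _ x.2⟩
  map_rel' := fun hadj => f.map_rel hadj

lemma reach_hom (f : G →g G) {W W' : Set V} (hW : ∀ x ∈ W, f x ∈ W')
    {a b : ↥W} (h : (G.induce W).Reachable a b) {a' b' : ↥W'}
    (ha : (a' : V) = f a.1) (hb : (b' : V) = f b.1) :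
    (G.induce W').Reachable a' b' := by
  have h2 := h.map (indHom f W W' hW)
  have ea : a' = indHom f W W' hW a := Subtype.ext ha
  have eb : b' = indHom f W W' hW b := Subtype.ext hb
  rw [ea, eb]; exact h2

lemma reach_incl {W W' : Set V} (hW : W ⊆ W')
    {a b : ↥W} (h : (G.induce W).Reachable a b) {a' b' : ↥W'}
    (ha : (a' : V) = a.1) (hb : (b' : V) = b.1) :
    (G.induce W').Reachable a' b' :=
  reach_hom (Hom.id) (fun x hx => hW hx) h ha hb

lemma psdForces_image (φ : G ≃g G) {B : Set V} {u x : V}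
    (hf : psdForces G B u x) : psdForces G (⇑φ '' B) (φ u) (φ x) := by
  obtain ⟨h1, h2, hw, h4⟩ := hf
  have hmemiff : ∀ y : V, y ∈ ⇑φ '' B ↔ φ.symm y ∈ B := by
    intro y
    constructor
    · rintro ⟨z, hz, rfl⟩; simpa using hz
    · intro hz; exact ⟨φ.symm y, hz, by simp⟩
  refine ⟨⟨u, h1, rfl⟩, φ.map_adj_iff.mpr h2, ?_, ?_⟩
  · intro hc; exact hw (by simpa using (hmemiff _).mp hc)
  · intro u'' hu'' hadj hreach
    have hu' : φ.symm u'' ∉ B := fun hc => hu'' ((hmemiff _).mpr hc)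
    have hadj' : G.Adj u (φ.symm u'') := by
      have := φ.symm.map_adj_iff.mpr hadj
      simpa using this
    have hreach' : (G.induce {y | y ∉ B}).Reachable ⟨φ.symm u'', hu'⟩ ⟨x, hw⟩ :=
      reach_hom (W := {y | y ∉ ⇑φ '' B}) (W' := {y | y ∉ B}) φ.symm.toHom
        (fun y (hy : y ∉ ⇑φ '' B) (hc : φ.symm y ∈ B) => hy ((hmemiff y).mpr hc))
        hreach rfl (by simp)
    have := h4 _ hu' hadj' hreach'
    have : u'' = φ x := by
      have h5 : φ (φ.symm u'') = φ x := congrArg φ this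
      simpa using h5
    exact this

lemma psdStep_image (φ : G ≃g G) (B : Set V) :
    psdStep G (⇑φ '' B) = ⇑φ '' psdStep G B := by
  ext y
  constructor
  · rintro (hy | ⟨u, hu⟩)
    · exact Set.image_mono Set.subset_union_left hy
    · refine ⟨φ.symm y, Or.inr ⟨φ.symm u, ?_⟩, by simp⟩
      have := psdForces_image φ.symm hu
      have himg : ⇑φ.symm '' (⇑φ '' B) = B := by
        rw [Set.image_image]; simp
      rwa [himg] at this
  · rintro ⟨x, hx | ⟨u, hu⟩, rfl⟩
    · exact Or.inl ⟨x, hx, rfl⟩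
    · exact Or.inr ⟨φ u, psdForces_image φ hu⟩

lemma iter_image (φ : G ≃g G) (B : Set V) (t : ℕ) :
    (psdStep G)^[t] (⇑φ '' B) = ⇑φ '' ((psdStep G)^[t] B) := by
  induction t with
  | zero => rfl
  | succ t ih =>
    rw [Function.iterate_succ_apply', Function.iterate_succ_apply', ih,
      psdStep_image]

lemma image_univ_iff (φ : G ≃g G) {X : Set V} :
    ⇑φ '' X = Set.univ ↔ X = Set.univ := by
  constructor
  · intro h
    apply Set.eq_univ_of_forall
    intro x
    have : φ x ∈ ⇑φ '' X := h ▸ Set.mem_univ _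
    rcases this with ⟨z, hz, hzx⟩
    rwa [← φ.toEquiv.injective hzx]
  · rintro rfl
    apply Set.eq_univ_of_forall
    intro x
    exact ⟨φ.symm x, Set.mem_univ _, by simp⟩

lemma forcing_image (φ : G ≃g G) {B : Set V} :
    IsPSDForcing G (⇑φ '' B) ↔ IsPSDForcing G B := by
  unfold IsPSDForcing
  constructor <;> rintro ⟨t, ht⟩ <;> refine ⟨t, ?_⟩
  · rw [iter_image] at ht; exact (image_univ_iff φ).mp ht
  · rw [iter_image, ht]; exact (image_univ_iff φ).mpr rfl

lemma psdPt_image (φ : G ≃g G) (B : Set V) :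
    psdPt G (⇑φ '' B) = psdPt G B := by
  unfold psdPt
  congr 1
  ext t
  simp only [Set.mem_setOf_eq, iter_image, image_univ_iff]


end PSDAux

namespace PSDAux
variable {V : Type*} {G : SimpleGraph V}

section Restrict
variable {S : Set V} {v : V}

/-- A walk from inside `S` to outside `S` must pass through `v`. -/
lemma exit_walk (hP1 : ∀ x y, x ∉ S → G.Adj x y → y ∈ S → y = v)
    {a b : V} (p : G.Walk a b) (ha : a ∈ S) (hb : b ∉ S) : v ∈ p.support := by
  induction p with
  | nil => exact absurd ha hb
  | @cons a c b hadj q ih =>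
    by_cases hc : c ∈ S
    · exact List.mem_cons_of_mem _ (ih hc hb)
    · have hav : a = v := hP1 c a hc hadj.symm ha
      rw [Walk.support_cons]
      rw [← hav]
      exact List.mem_cons_self

/-- A path between two vertices of `S` stays in `S`. -/
lemma path_stay [DecidableEq V] (hP1 : ∀ x y, x ∉ S → G.Adj x y → y ∈ S → y = v)
    (hvS : v ∈ S) {a b : V} (p : G.Walk a b) (hp : p.IsPath)
    (ha : a ∈ S) (hb : b ∈ S) : ∀ x ∈ p.support, x ∈ S := by
  intro x hx
  by_contra hxS
  have hv1 : v ∈ (p.takeUntil x hx).support := exit_walk hP1 _ ha hxS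
  have hv2 : v ∈ (p.dropUntil x hx).support := by
    have := exit_walk hP1 (p.dropUntil x hx).reverse hb hxS
    rwa [Walk.support_reverse, List.mem_reverse] at this
  have hv2' : v ∈ (p.dropUntil x hx).support.tail := by
    have hc := Walk.support_eq_cons (p.dropUntil x hx)
    rw [hc] at hv2
    rcases List.mem_cons.mp hv2 with h | h
    · exact absurd (h ▸ hvS) hxS
    · exact h
  have hnd : p.support.Nodup := hp.support_nodup
  rw [← Walk.take_spec p hx, Walk.support_append] at hnd
  rw [List.nodup_append] at hnd
  exact hnd.2.2 v hv1 v hv2' rfl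

/-- Build reachability in the doubly-induced graph from a `G`-walk staying in `S ∖ B`. -/
lemma rebuild {B : Set V} {a b : V} (p : G.Walk a b)
    (hS : ∀ x ∈ p.support, x ∈ S) (hB : ∀ x ∈ p.support, x ∉ B)
    (haS : a ∈ S) (haB : (⟨a, haS⟩ : ↥S) ∉ (Subtype.val ⁻¹' B : Set ↥S))
    (hbS : b ∈ S) (hbB : (⟨b, hbS⟩ : ↥S) ∉ (Subtype.val ⁻¹' B : Set ↥S)) :
    ((G.induce S).induce {x | x ∉ (Subtype.val ⁻¹' B : Set ↥S)}).Reachable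
      ⟨⟨a, haS⟩, haB⟩ ⟨⟨b, hbS⟩, hbB⟩ := by
  induction p with
  | nil => rfl
  | @cons a c b hadj q ih =>
    have hcS : c ∈ S := hS c (by simp)
    have hcB : (⟨c, hcS⟩ : ↥S) ∉ (Subtype.val ⁻¹' B : Set ↥S) := hB c (by simp)
    have hstep : ((G.induce S).induce {x | x ∉ (Subtype.val ⁻¹' B : Set ↥S)}).Adj
        ⟨⟨a, haS⟩, haB⟩ ⟨⟨c, hcS⟩, hcB⟩ := hadj
    exact (hstep.reachable).trans
      (ih (fun x hx => hS x (by simp [hx])) (fun x hx => hB x (by simp [hx])) hcS hcB hbS hbB)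

/-- Transfer of white-reachability between `G` and `G.induce S`. -/
lemma reach_transfer [DecidableEq V]
    (hP1 : ∀ x y, x ∉ S → G.Adj x y → y ∈ S → y = v) (hvS : v ∈ S)
    {B : Set V} {a b : V} (haS : a ∈ S) (hbS : b ∈ S) (haB : a ∉ B) (hbB : b ∉ B) :
    (G.induce {x | x ∉ B}).Reachable ⟨a, haB⟩ ⟨b, hbB⟩ ↔
    ((G.induce S).induce {x | x ∉ (Subtype.val ⁻¹' B : Set ↥S)}).Reachable
      ⟨⟨a, haS⟩, haB⟩ ⟨⟨b, hbS⟩, hbB⟩ := by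
  constructor
  · intro h
    obtain ⟨p0⟩ := h
    -- map to a G-walk
    have hWsub : ∀ x : ↥{x | x ∉ B}, (x : V) ∈ Set.univ := fun _ => Set.mem_univ _
    let emb : G.induce {x | x ∉ B} →g G := ⟨Subtype.val, fun h => h⟩
    let q := p0.map emb
    have hqsupp : ∀ x ∈ q.support, x ∉ B := by
      intro x hx
      rw [Walk.support_map] at hx
      rcases List.mem_map.mp hx with ⟨y, _, rfl⟩
      exact y.2
    let q' := q.bypass
    have hq'p : q'.IsPath := Walk.bypass_isPath q
    have hq'supp : ∀ x ∈ q'.support, x ∉ B :=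
      fun x hx => hqsupp x (Walk.support_bypass_subset q hx)
    have hq'S : ∀ x ∈ q'.support, x ∈ S := path_stay hP1 hvS q' hq'p haS hbS
    exact rebuild q' hq'S hq'supp haS haB hbS hbB
  · intro h
    exact h.map (⟨fun x => ⟨x.1.1, x.2⟩, fun hadj => hadj⟩ :
      (G.induce S).induce {x | x ∉ (Subtype.val ⁻¹' B : Set ↥S)} →g
        G.induce {x | x ∉ B})

end Restrict
end PSDAux

namespace PSDAux
variable {V : Type*} {G : SimpleGraph V}
section Restrict2
variable {S : Set V} {v : V}

lemma forces_transfer [DecidableEq V]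
    (hP1 : ∀ x y, x ∉ S → G.Adj x y → y ∈ S → y = v) (hvS : v ∈ S)
    {B : Set V} {u x : V} (huS : u ∈ S) (hxS : x ∈ S) :
    psdForces G B u x ↔
      psdForces (G.induce S) (Subtype.val ⁻¹' B) ⟨u, huS⟩ ⟨x, hxS⟩ := by
  constructor
  · rintro ⟨h1, h2, hw, h4⟩
    refine ⟨h1, h2, hw, ?_⟩
    rintro ⟨u'', hu''S⟩ hu'' hadj hreach
    have hu''B : u'' ∉ B := hu''
    have hr : (G.induce {y | y ∉ B}).Reachable ⟨u'', hu''B⟩ ⟨x, hw⟩ :=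
      (reach_transfer hP1 hvS hu''S hxS hu''B hw).mpr hreach
    exact Subtype.ext (h4 u'' hu''B hadj hr)
  · rintro ⟨h1, h2, hw, h4⟩
    have huB : u ∈ B := h1
    have hxB : x ∉ B := hw
    refine ⟨huB, h2, hxB, ?_⟩
    intro u'' hu'' hadj hreach
    by_cases hu''S : u'' ∈ S
    · have := h4 ⟨u'', hu''S⟩ hu'' hadj
        ((reach_transfer hP1 hvS hu''S hxS hu'' hxB).mp hreach)
      exact congrArg Subtype.val this
    · by_cases huv : u = v
      · -- impossible: a white path from u'' ∉ S to x ∈ S passes v which is blue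
        exfalso
        obtain ⟨p0⟩ := hreach
        let emb : G.induce {y | y ∉ B} →g G := ⟨Subtype.val, fun h => h⟩
        let q := (p0.map emb).reverse
        have hq : v ∈ q.support := exit_walk hP1 q hxS hu''S
        have : v ∉ B := by
          rw [Walk.support_reverse, List.mem_reverse, Walk.support_map] at hq
          rcases List.mem_map.mp hq with ⟨y, _, hy⟩
          rw [← hy]
          exact y.2
        exact this (huv ▸ huB)
      · exact absurd (hP1 u'' u hu''S hadj.symm huS) huv

lemma step_transfer [DecidableEq V]
    (hP1 : ∀ x y, x ∉ S → G.Adj x y → y ∈ S → y = v) (hvS : v ∈ S)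
    {B : Set V}
    (Hv : v ∉ B → ∀ u, psdForces G B u v → ∃ u' ∈ S, psdForces G B u' v) :
    (Subtype.val ⁻¹' (psdStep G B) : Set ↥S) =
      psdStep (G.induce S) (Subtype.val ⁻¹' B) := by
  ext ⟨x, hxS⟩
  constructor
  · rintro (hx | ⟨u, hu⟩)
    · exact Or.inl hx
    · by_cases hxv : x = v
      · subst hxv
        have hvB : x ∉ B := hu.2.2.1
        obtain ⟨u', hu'S, hf⟩ := Hv hvB u hu
        exact Or.inr ⟨⟨u', hu'S⟩, (forces_transfer hP1 hvS hu'S hxS).mp hf⟩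
      · have huS : u ∈ S := by
          by_contra huS
          exact hxv (hP1 u x huS hu.2.1 hxS)
        exact Or.inr ⟨⟨u, huS⟩, (forces_transfer hP1 hvS huS hxS).mp hu⟩
  · rintro (hx | ⟨⟨u, huS⟩, hu⟩)
    · exact Or.inl hx
    · exact Or.inr ⟨u, (forces_transfer hP1 hvS huS hxS).mpr hu⟩

lemma iter_transfer [DecidableEq V]
    (hP1 : ∀ x y, x ∉ S → G.Adj x y → y ∈ S → y = v) (hvS : v ∈ S)
    {B : Set V}
    (Hv : ∀ t, v ∉ (psdStep G)^[t] B → ∀ u, psdForces G ((psdStep G)^[t] B) u v →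
      ∃ u' ∈ S, psdForces G ((psdStep G)^[t] B) u' v) (t : ℕ) :
    (Subtype.val ⁻¹' ((psdStep G)^[t] B) : Set ↥S) =
      (psdStep (G.induce S))^[t] (Subtype.val ⁻¹' B) := by
  induction t with
  | zero => rfl
  | succ t ih =>
    rw [Function.iterate_succ_apply', Function.iterate_succ_apply', ← ih]
    exact step_transfer hP1 hvS (Hv t)

end Restrict2
end PSDAux

namespace PSDAux
variable {V : Type*}

open Classical in
lemma tau_exists (T : SimpleGraph V) (w : V → ℕ) (v : V) {Cz Ci : Set V}
    (hF1z : ∀ x y, x ∈ Cz → T.Adj x y → y = v ∨ y ∈ Cz)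
    (hF1i : ∀ x y, x ∈ Ci → T.Adj x y → y = v ∨ y ∈ Ci)
    (hdisj : ∀ x, x ∈ Cz → x ∉ Ci) (hvz : v ∉ Cz) (hvi : v ∉ Ci)
    (σ : T ≃g T) (hs : IsSymmetryMap T w Cz Ci σ) :
    ∃ φ : T ≃g T, Function.Involutive ⇑φ ∧ ⇑φ '' Cz = Ci ∧
      (∀ x, x ∉ Cz ∪ Ci → φ x = x) ∧ (∀ x, w (φ x) = w x) := by
  obtain ⟨hfix, himg, himg', hwt⟩ := hs
  set f : V → V := fun x => if x ∈ Cz then σ x else if x ∈ Ci then σ.symm x else x with hf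
  have hsv : σ v = v := hfix v (by simp [hvz, hvi])
  have hsv' : σ.symm v = v := by
    conv_lhs => rw [← hsv]
    simp
  have hmem1 : ∀ x ∈ Cz, σ x ∈ Ci := by
    intro x hx; rw [← himg]; exact ⟨x, hx, rfl⟩
  have hmem2 : ∀ x ∈ Ci, σ.symm x ∈ Cz := by
    intro x hx
    rw [← himg] at hx
    rcases hx with ⟨z, hz, rfl⟩
    simpa using hz
  have hfz : ∀ x ∈ Cz, f x = σ x := by intro x hx; simp [hf, hx]
  have hfi : ∀ x ∈ Ci, f x = σ.symm x := by
    intro x hx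
    have hxz : x ∉ Cz := fun h => hdisj x h hx
    simp [hf, hxz, hx]
  have hfo : ∀ x, x ∉ Cz → x ∉ Ci → f x = x := by intro x h1 h2; simp [hf, h1, h2]
  have hinv : Function.Involutive f := by
    intro x
    by_cases hxz : x ∈ Cz
    · rw [hfz x hxz]
      have h1 : σ x ∈ Ci := hmem1 x hxz
      rw [hfi _ h1]
      simp
    · by_cases hxi : x ∈ Ci
      · rw [hfi x hxi]
        have h1 : σ.symm x ∈ Cz := hmem2 x hxi
        rw [hfz _ h1]
        simp
      · rw [hfo x hxz hxi, hfo x hxz hxi]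
  have fwd : ∀ x y, T.Adj x y → T.Adj (f x) (f y) := by
    intro x y hxy
    by_cases hxz : x ∈ Cz
    · rcases hF1z x y hxz hxy with rfl | hyz
      · rw [hfz x hxz, hfo y hvz hvi]
        have := σ.map_adj_iff.mpr hxy
        rwa [hsv] at this
      · rw [hfz x hxz, hfz y hyz]
        exact σ.map_adj_iff.mpr hxy
    · by_cases hxi : x ∈ Ci
      · rcases hF1i x y hxi hxy with rfl | hyi
        · rw [hfi x hxi, hfo y hvz hvi]
          have := σ.symm.map_adj_iff.mpr hxy
          rwa [hsv'] at this
        · rw [hfi x hxi, hfi y hyi]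
          exact σ.symm.map_adj_iff.mpr hxy
      · rw [hfo x hxz hxi]
        by_cases hyz : y ∈ Cz
        · have hxv : x = v := (hF1z y x hyz hxy.symm).resolve_right hxz
          subst hxv
          rw [hfz y hyz]
          have := σ.map_adj_iff.mpr hxy
          rwa [hsv] at this
        · by_cases hyi : y ∈ Ci
          · have hxv : x = v := (hF1i y x hyi hxy.symm).resolve_right hxi
            subst hxv
            rw [hfi y hyi]
            have := σ.symm.map_adj_iff.mpr hxy
            rwa [hsv'] at this
          · rw [hfo y hyz hyi]
            exact hxy
  have hadj2 : ∀ x y, T.Adj (f x) (f y) ↔ T.Adj x y := by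
    intro x y
    constructor
    · intro h
      have := fwd _ _ h
      rwa [hinv x, hinv y] at this
    · exact fwd x y
  refine ⟨⟨hinv.toPerm, ?_⟩, hinv, ?_, ?_, ?_⟩
  · intro a b
    exact hadj2 a b
  · ext y
    constructor
    · rintro ⟨x, hx, rfl⟩
      show f x ∈ Ci
      rw [hfz x hx]
      exact hmem1 x hx
    · intro hy
      refine ⟨σ.symm y, hmem2 y hy, ?_⟩
      show f (σ.symm y) = y
      rw [hfz _ (hmem2 y hy)]
      simp
  · intro x hx
    rw [Set.mem_union] at hx
    push_neg at hx
    exact hfo x hx.1 hx.2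
  · intro x
    show w (f x) = w x
    by_cases hxz : x ∈ Cz
    · rw [hfz x hxz]; exact hwt x hxz
    · by_cases hxi : x ∈ Ci
      · rw [hfi x hxi]
        have h1 : σ.symm x ∈ Cz := hmem2 x hxi
        have := hwt _ h1
        rw [σ.apply_symm_apply] at this
        exact this.symm
      · rw [hfo x hxz hxi]

end PSDAux


namespace PSDAux

lemma psdThW_le' {V : Type*} (G : SimpleGraph V) (w : V → ℕ) (B : Finset V)
    (hB : IsPSDForcing G ↑B) : psdThW G w ≤ (∑ x ∈ B, w x) + psdPt G ↑B :=
  Nat.sInf_le ⟨B, hB, rfl⟩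

lemma psdThW_mem' {V : Type*} [Fintype V] (G : SimpleGraph V) (w : V → ℕ) :
    ∃ B : Finset V, IsPSDForcing G ↑B ∧ psdThW G w = (∑ x ∈ B, w x) + psdPt G ↑B := by
  have hne : {k | ∃ B : Finset V, IsPSDForcing G ↑B ∧
      k = (∑ x ∈ B, w x) + psdPt G ↑B}.Nonempty :=
    ⟨_, Finset.univ, ⟨0, by rw [Finset.coe_univ, Function.iterate_zero_apply]⟩, rfl⟩
  exact Nat.sInf_mem hne

end PSDAux

open PSDAux in
open Classical in
/-- Concentration preserves the weighted PSD-throttling number: if `(T,w)` is a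
positive-integer weighted finite tree, `w(v) = 1`, and `C 0, …, C (m-1)` is a maximal set of
pairwise symmetric branches of `T` at `v`, then the single concentration
`T' = T - (C 1 ∪ ⋯ ∪ C (m-1))` with weights multiplied by `m` on `C 0` satisfies
`th₊(T,w) = th₊(T',w')`. -/
theorem stmt4 {V : Type*} [Fintype V] [DecidableEq V] (T : SimpleGraph V) (hT : T.IsTree)
    (w : V → ℕ) (hw : ∀ x, 0 < w x) (v : V) (hv : w v = 1)
    (m : ℕ) (hm : 0 < m) (C : Fin m → Set V)
    (hbranch : ∀ i, IsBranch T v (C i)) (hinj : Function.Injective C)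
    (σ : Fin m → (T ≃g T))
    (hσ : ∀ i, i ≠ ⟨0, hm⟩ → IsSymmetryMap T w (C ⟨0, hm⟩) (C i) (σ i))
    (hmax : ∀ D : Set V, IsBranch T v D →
      (∃ τ : T ≃g T, IsSymmetryMap T w (C ⟨0, hm⟩) D τ) → ∃ i, D = C i) :
    psdThW T w =
      psdThW (T.induce {x : V | ∀ i, i ≠ ⟨0, hm⟩ → x ∉ C i})
        (fun x => if (x : V) ∈ C ⟨0, hm⟩ then m * w x else w x) := by
  classical
  set z : Fin m := ⟨0, hm⟩ with hzdef
  set S : Set V := {x : V | ∀ i, i ≠ z → x ∉ C i} with hSdef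
  -- basic structure of branches
  have hF1 : ∀ (i : Fin m) x y, x ∈ C i → T.Adj x y → y = v ∨ y ∈ C i := by
    intro i x y hx hxy
    obtain ⟨K, hK⟩ := hbranch i
    by_cases hyv : y = v
    · exact Or.inl hyv
    · right
      rw [hK] at hx ⊢
      obtain ⟨a, ha, hax⟩ := hx
      have hxv : x ≠ v := hax ▸ a.2
      have hadj : (T.induce {x | x ≠ v}).Adj ⟨x, hxv⟩ ⟨y, hyv⟩ := hxy
      have hmk := SimpleGraph.ConnectedComponent.connectedComponentMk_eq_of_adj hadj.symm
      have ha' : a = ⟨x, hxv⟩ := Subtype.ext hax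
      rw [SimpleGraph.ConnectedComponent.mem_supp_iff] at ha
      refine ⟨⟨y, hyv⟩, ?_, rfl⟩
      rw [SimpleGraph.ConnectedComponent.mem_supp_iff, hmk, ← ha, ha']
  have hvC : ∀ i, v ∉ C i := by
    intro i hvi
    obtain ⟨K, hK⟩ := hbranch i
    rw [hK] at hvi
    obtain ⟨a, _, hav⟩ := hvi
    exact a.2 hav
  have hdisj : ∀ i j, i ≠ j → ∀ x, x ∈ C i → x ∉ C j := by
    intro i j hij x hxi hxj
    obtain ⟨Ki, hKi⟩ := hbranch i
    obtain ⟨Kj, hKj⟩ := hbranch j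
    rw [hKi] at hxi
    rw [hKj] at hxj
    obtain ⟨a, ha, hax⟩ := hxi
    obtain ⟨b, hb, hbx⟩ := hxj
    have hab : a = b := Subtype.ext (hax.trans hbx.symm)
    rw [SimpleGraph.ConnectedComponent.mem_supp_iff] at ha hb
    have : Ki = Kj := by rw [← ha, ← hb, hab]
    exact hij (hinj (by rw [hKi, hKj, this]))
  have hvS : v ∈ S := fun i _ => hvC i
  have hCzS : ∀ x ∈ C z, x ∈ S := by
    intro x hx i hiz
    exact fun hxi => hdisj z i (Ne.symm hiz) x hx hxi
  have hSc : ∀ x, x ∉ S → ∃ i, i ≠ z ∧ x ∈ C i := by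
    intro x hx
    by_contra hc
    push_neg at hc
    exact hx (fun i hiz => hc i hiz)
  have hCiS : ∀ (i : Fin m), i ≠ z → ∀ x ∈ C i, x ∉ S := by
    intro i hiz x hxi hxS
    exact hxS i hiz hxi
  have hP1 : ∀ x y, x ∉ S → T.Adj x y → y ∈ S → y = v := by
    intro x y hxS hxy hyS
    obtain ⟨i, hiz, hxi⟩ := hSc x hxS
    rcases hF1 i x y hxi hxy with h | h
    · exact h
    · exact absurd h (fun h => hCiS i hiz y h hyS)
  -- the involutive symmetries
  have htau : ∀ i : Fin m, ∃ φ : T ≃g T, Function.Involutive ⇑φ ∧ ⇑φ '' C z = C i ∧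
      (∀ x, x ∉ C z ∪ C i → φ x = x) ∧ (∀ x, w (φ x) = w x) ∧ (i = z → ∀ x, φ x = x) := by
    intro i
    by_cases hiz : i = z
    · subst hiz
      exact ⟨RelIso.refl _, fun x => rfl, by simp, fun x _ => rfl, fun x => rfl,
        fun _ x => rfl⟩
    · obtain ⟨φ, h1, h2, h3, h4⟩ := tau_exists T w v (hF1 z) (hF1 i)
        (fun x hx => hdisj z i (Ne.symm hiz) x hx) (hvC z) (hvC i) (σ i) (hσ i hiz)
      exact ⟨φ, h1, h2, h3, h4, fun h => absurd h hiz⟩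
  choose τ hτinv hτimg hτfix hτw hτid using htau
  have hτz : ∀ x, τ z x = x := hτid z rfl
  have hτv : ∀ i, τ i v = v := fun i => hτfix i v (by simp [hvC z, hvC i])
  have hτmemz : ∀ i, ∀ x ∈ C z, τ i x ∈ C i := by
    intro i x hx
    rw [← hτimg i]
    exact ⟨x, hx, rfl⟩
  have hτimg' : ∀ i, ⇑(τ i) '' C i = C z := by
    intro i
    rw [← hτimg i, Set.image_image]
    simp only [hτinv i _, Set.image_id']
  have hτmemi : ∀ i, ∀ x ∈ C i, τ i x ∈ C z := by
    intro i x hx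
    rw [← hτimg' i]
    exact ⟨x, hx, rfl⟩
  have hτS : ∀ i, ∀ x, x ∈ S → x ∉ C z → τ i x = x := by
    intro i x hxS hxz
    refine hτfix i x ?_
    intro hc
    rcases hc with hc | hc
    · exact hxz hc
    · by_cases hiz : i = z
      · exact hxz (hiz ▸ hc)
      · exact hCiS i hiz x hc hxS
  have hτinj : ∀ i, Function.Injective ⇑(τ i) := fun i => (τ i).toEquiv.injective
  -- helper : coe of Finset.subtype
  have hsubcoe : ∀ E : Finset V,
      (↑(E.subtype (· ∈ S)) : Set ↥S) = (Subtype.val ⁻¹' (↑E : Set V) : Set ↥S) := by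
    intro E
    ext y
    simp [Finset.mem_subtype]
  -- packaging of the restriction argument
  have hfinish : ∀ Dfin : Finset V, IsPSDForcing T ↑Dfin →
      (∀ t, v ∉ (psdStep T)^[t] ↑Dfin → ∀ u, psdForces T ((psdStep T)^[t] ↑Dfin) u v →
        ∃ u' ∈ S, psdForces T ((psdStep T)^[t] ↑Dfin) u' v) →
      IsPSDForcing (T.induce S) ↑(Dfin.subtype (· ∈ S)) ∧
        psdPt (T.induce S) ↑(Dfin.subtype (· ∈ S)) ≤ psdPt T ↑Dfin := by
    intro Dfin hforce Hv
    have htr := iter_transfer hP1 hvS Hv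
    have hU : (psdStep T)^[psdPt T ↑Dfin] ↑Dfin = Set.univ := iter_psdPt hforce
    have hU' : (psdStep (T.induce S))^[psdPt T ↑Dfin] ↑(Dfin.subtype (· ∈ S)) = Set.univ := by
      rw [hsubcoe, ← htr, hU, Set.preimage_univ]
    exact ⟨⟨_, hU'⟩, psdPt_le hU'⟩
  refine le_antisymm ?_ ?_
  -- ===================== direction : th(T) ≤ th(T') =====================
  · obtain ⟨B', hB'f, hB'eq⟩ := psdThW_mem' (T.induce S)
      (fun x => if (x : V) ∈ C z then m * w ↑x else w ↑x)
    rw [hB'eq]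
    set Mf : Finset V := (B'.image Subtype.val).filter (· ∈ C z) with hMfdef
    set Pf : Finset V := (B'.image Subtype.val).filter (· ∉ C z) with hPfdef
    set Bfin : Finset V := Pf ∪ Finset.univ.biUnion (fun i : Fin m => Mf.image ⇑(τ i))
      with hBfindef
    have hMfCz : ∀ x ∈ Mf, x ∈ C z := fun x hx => (Finset.mem_filter.mp hx).2
    have hPfS : ∀ x ∈ Pf, x ∈ S := by
      intro x hx
      obtain ⟨y, _, rfl⟩ := Finset.mem_image.mp (Finset.mem_filter.mp hx).1
      exact y.2
    have hPfz : ∀ x ∈ Pf, x ∉ C z := fun x hx => (Finset.mem_filter.mp hx).2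
    have himgMf : ∀ i : Fin m, ∀ x ∈ Mf.image ⇑(τ i), x ∈ C i := by
      intro i x hx
      obtain ⟨y, hy, rfl⟩ := Finset.mem_image.mp hx
      exact hτmemz i y (hMfCz y hy)
    have hclose : ∀ (k : Fin m), ∀ x ∈ Bfin, τ k x ∈ Bfin := by
      intro k x hx
      rcases Finset.mem_union.mp hx with hx | hx
      · apply Finset.mem_union.mpr (Or.inl _)
        have h1 : τ k x = x := hτS k x (hPfS x hx) (hPfz x hx)
        rwa [h1]
      · obtain ⟨i, _, hxi⟩ := Finset.mem_biUnion.mp hx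
        obtain ⟨y, hy, rfl⟩ := Finset.mem_image.mp hxi
        by_cases hik : i = k
        · subst hik
          apply Finset.mem_union.mpr (Or.inr _)
          refine Finset.mem_biUnion.mpr ⟨z, Finset.mem_univ _, ?_⟩
          apply Finset.mem_image.mpr ⟨y, hy, ?_⟩
          rw [hτinv i y, hτz y]
        · by_cases hiz : i = z
          · subst hiz
            apply Finset.mem_union.mpr (Or.inr _)
            refine Finset.mem_biUnion.mpr ⟨k, Finset.mem_univ _, ?_⟩
            apply Finset.mem_image.mpr ⟨y, hy, ?_⟩
            rw [hτz y]
          · have hyCi : τ i y ∈ C i := hτmemz i y (hMfCz y hy)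
            have hfix : τ k (τ i y) = τ i y := by
              apply hτfix k
              intro hc
              rcases hc with hc | hc
              · exact hdisj i z hiz _ hyCi hc
              · exact hdisj i k hik _ hyCi hc
            rw [hfix]
            exact Finset.mem_union.mpr (Or.inr (Finset.mem_biUnion.mpr
              ⟨i, Finset.mem_univ _, hxi⟩))
    have hLinv : ∀ k : Fin m, ⇑(τ k) '' (↑Bfin : Set V) = ↑Bfin := by
      intro k
      apply Set.Subset.antisymm
      · rintro y ⟨x, hx, rfl⟩
        exact hclose k x hx
      · intro x hx
        exact ⟨τ k x, hclose k x hx, hτinv k x⟩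
    have hXinv : ∀ (k : Fin m) (t : ℕ),
        ⇑(τ k) '' ((psdStep T)^[t] ↑Bfin) = (psdStep T)^[t] ↑Bfin := by
      intro k t
      rw [← iter_image (τ k), hLinv]
    have Hv : ∀ t, v ∉ (psdStep T)^[t] ↑Bfin →
        ∀ u, psdForces T ((psdStep T)^[t] ↑Bfin) u v →
        ∃ u' ∈ S, psdForces T ((psdStep T)^[t] ↑Bfin) u' v := by
      intro t hvt u hu
      by_cases huS : u ∈ S
      · exact ⟨u, huS, hu⟩
      · obtain ⟨i, hiz, hui⟩ := hSc u huS
        refine ⟨τ i u, hCzS _ (hτmemi i u hui), ?_⟩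
        have h2 := psdForces_image (τ i) hu
        rwa [hXinv i t, hτv i] at h2
    have htrans := iter_transfer hP1 hvS Hv
    have hpre : (Subtype.val ⁻¹' (↑Bfin : Set V) : Set ↥S) = ↑B' := by
      ext y
      simp only [Set.mem_preimage, Finset.mem_coe]
      constructor
      · intro hy
        rcases Finset.mem_union.mp hy with hy | hy
        · obtain ⟨b, hb, hbe⟩ := Finset.mem_image.mp (Finset.mem_filter.mp hy).1
          rwa [show b = y from Subtype.ext hbe] at hb
        · obtain ⟨i, _, hyi⟩ := Finset.mem_biUnion.mp hy
          by_cases hiz : i = z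
          · subst hiz
            obtain ⟨x, hx, hxe⟩ := Finset.mem_image.mp hyi
            rw [hτz x] at hxe
            obtain ⟨b, hb, hbe⟩ := Finset.mem_image.mp (Finset.mem_filter.mp hx).1
            rw [hxe] at hbe
            rwa [show b = y from Subtype.ext hbe] at hb
          · exact absurd (himgMf i _ hyi) (fun h => hCiS i hiz _ h y.2)
      · intro hy
        by_cases hyz : (y : V) ∈ C z
        · refine Finset.mem_union.mpr (Or.inr (Finset.mem_biUnion.mpr
            ⟨z, Finset.mem_univ _, ?_⟩))
          refine Finset.mem_image.mpr ⟨y, ?_, hτz y⟩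
          exact Finset.mem_filter.mpr ⟨Finset.mem_image.mpr ⟨y, hy, rfl⟩, hyz⟩
        · exact Finset.mem_union.mpr (Or.inl
            (Finset.mem_filter.mpr ⟨Finset.mem_image.mpr ⟨y, hy, rfl⟩, hyz⟩))
    have hXuniv : ∀ t, (psdStep (T.induce S))^[t] ↑B' = Set.univ →
        (psdStep T)^[t] ↑Bfin = Set.univ := by
      intro t ht
      apply Set.eq_univ_of_forall
      intro x
      by_cases hxS : x ∈ S
      · have h1 : (⟨x, hxS⟩ : ↥S) ∈ (Subtype.val ⁻¹' ((psdStep T)^[t] ↑Bfin) : Set ↥S) := by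
          rw [htrans t, hpre, ht]
          trivial
        exact h1
      · obtain ⟨i, _, hxi⟩ := hSc x hxS
        have h1 : τ i x ∈ C z := hτmemi i x hxi
        have h2 : (⟨τ i x, hCzS _ h1⟩ : ↥S) ∈
            (Subtype.val ⁻¹' ((psdStep T)^[t] ↑Bfin) : Set ↥S) := by
          rw [htrans t, hpre, ht]
          trivial
        have h3 : τ i x ∈ (psdStep T)^[t] ↑Bfin := h2
        have h4 := Set.mem_image_of_mem ⇑(τ i) h3
        rw [hXinv i t] at h4
        rwa [hτinv i x] at h4
    have hBfinforce : IsPSDForcing T ↑Bfin := by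
      obtain ⟨t, ht⟩ := hB'f
      exact ⟨t, hXuniv t ht⟩
    have hptle : psdPt T ↑Bfin ≤ psdPt (T.induce S) ↑B' :=
      psdPt_le (hXuniv _ (iter_psdPt hB'f))
    -- weights
    have hwsum : (∑ x ∈ Bfin, w x) =
        ∑ x ∈ B', (if (x : V) ∈ C z then m * w ↑x else w ↑x) := by
      have hdisjPf : Disjoint Pf (Finset.univ.biUnion (fun i : Fin m => Mf.image ⇑(τ i))) := by
        rw [Finset.disjoint_left]
        intro x hx hc
        obtain ⟨i, _, hxi⟩ := Finset.mem_biUnion.mp hc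
        have hxCi := himgMf i x hxi
        by_cases hiz : i = z
        · exact hPfz x hx (hiz ▸ hxCi)
        · exact hCiS i hiz x hxCi (hPfS x hx)
      have hpair : Set.PairwiseDisjoint (↑(Finset.univ : Finset (Fin m)))
          (fun i : Fin m => Mf.image ⇑(τ i)) := by
        intro i _ j _ hij
        apply Finset.disjoint_left.mpr
        intro x hxi hxj
        exact hdisj i j hij x (himgMf i x hxi) (himgMf j x hxj)
      rw [Finset.sum_union hdisjPf, Finset.sum_biUnion hpair]
      have himgsum : ∀ i : Fin m, (∑ x ∈ Mf.image ⇑(τ i), w x) = ∑ x ∈ Mf, w x := by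
        intro i
        rw [Finset.sum_image (fun x _ y _ h => hτinj i h)]
        exact Finset.sum_congr rfl (fun x _ => hτw i x)
      have h1 : (∑ i : Fin m, ∑ x ∈ Mf.image ⇑(τ i), w x) = m * ∑ x ∈ Mf, w x := by
        rw [Finset.sum_congr rfl (fun i _ => himgsum i), Finset.sum_const,
          Finset.card_univ, Fintype.card_fin, smul_eq_mul]
      rw [h1]
      -- right-hand side
      rw [← Finset.sum_filter_add_sum_filter_not B' (fun y : ↥S => (y : V) ∈ C z)]
      have h2 : (∑ y ∈ B'.filter (fun y : ↥S => (y : V) ∈ C z),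
          (if (y : V) ∈ C z then m * w ↑y else w ↑y)) = m * ∑ x ∈ Mf, w x := by
        rw [Finset.sum_congr rfl (fun y hy => if_pos (Finset.mem_filter.mp hy).2)]
        have h3 : Mf = (B'.filter (fun y : ↥S => (y : V) ∈ C z)).image Subtype.val := by
          rw [hMfdef, Finset.filter_image]
        rw [h3, Finset.sum_image (fun x _ y _ h => Subtype.ext h), Finset.mul_sum]
      have h4 : (∑ y ∈ B'.filter (fun y : ↥S => ¬ (y : V) ∈ C z),
          (if (y : V) ∈ C z then m * w ↑y else w ↑y)) = ∑ x ∈ Pf, w x := by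
        rw [Finset.sum_congr rfl (fun y hy => if_neg (Finset.mem_filter.mp hy).2)]
        have h3 : Pf = (B'.filter (fun y : ↥S => ¬ (y : V) ∈ C z)).image Subtype.val := by
          rw [hPfdef, Finset.filter_image]
        rw [h3, Finset.sum_image (fun x _ y _ h => Subtype.ext h)]
      rw [h2, h4]
      ring
    calc psdThW T w ≤ (∑ x ∈ Bfin, w x) + psdPt T ↑Bfin :=
          psdThW_le' T w Bfin hBfinforce
      _ ≤ (∑ x ∈ B', (if (x : V) ∈ C z then m * w ↑x else w ↑x)) +
            psdPt (T.induce S) ↑B' := by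
          rw [hwsum]
          exact Nat.add_le_add_left hptle _
  -- ===================== direction : th(T') ≤ th(T) =====================
  · obtain ⟨Bf, hBff, hBfeq⟩ := psdThW_mem' T w
    rw [hBfeq]
    set wi : Fin m → ℕ := fun i => ∑ x ∈ Bf.filter (· ∈ C i), w x with hwidef
    obtain ⟨jm, _, hjm⟩ := Finset.exists_min_image Finset.univ wi ⟨z, Finset.mem_univ z⟩
    have hsum_lb : m * wi jm ≤ ∑ i : Fin m, wi i := by
      have h1 := Finset.card_nsmul_le_sum Finset.univ wi (wi jm)
        (fun i _ => hjm i (Finset.mem_univ i))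
      rwa [Finset.card_univ, Fintype.card_fin, smul_eq_mul] at h1
    have hsplit : (∑ x ∈ Bf, w x) =
        (∑ i : Fin m, wi i) + ∑ x ∈ Bf.filter (fun x => ∀ i, x ∉ C i), w x := by
      rw [← Finset.sum_filter_add_sum_filter_not Bf (fun x => ∃ i, x ∈ C i)]
      congr 1
      · have h1 : Bf.filter (fun x => ∃ i, x ∈ C i) =
            Finset.univ.biUnion (fun i : Fin m => Bf.filter (· ∈ C i)) := by
          ext x
          simp only [Finset.mem_filter, Finset.mem_biUnion, Finset.mem_univ, true_and]
          constructor
          · rintro ⟨hx, i, hi⟩; exact ⟨i, hx, hi⟩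
          · rintro ⟨i, hx, hi⟩; exact ⟨hx, i, hi⟩
        rw [h1, Finset.sum_biUnion]
        intro i _ j _ hij
        apply Finset.disjoint_left.mpr
        intro x hxi hxj
        exact hdisj i j hij x (Finset.mem_filter.mp hxi).2 (Finset.mem_filter.mp hxj).2
      · apply Finset.sum_congr _ (fun _ _ => rfl)
        ext x
        simp only [Finset.mem_filter, not_exists]
    -- general weight computation for the concentrated set
    have hWcomp : ∀ j : Fin m, (∑ x ∈ (Bf.image ⇑(τ j)).filter (· ∈ S),
        (if x ∈ C z then m * w x else w x)) =
        m * wi j + ∑ x ∈ Bf.filter (fun x => ∀ i, x ∉ C i), w x := by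
      intro j
      rw [Finset.filter_image, Finset.sum_image (fun x _ y _ h => hτinj j h)]
      have hfe : Bf.filter (fun a => τ j a ∈ S) =
          Bf.filter ((· ∈ C j)) ∪ Bf.filter (fun x => ∀ i, x ∉ C i) := by
        rw [← Finset.filter_or]
        apply Finset.filter_congr
        intro x _
        constructor
        · intro hxS
          by_cases hxCj : x ∈ C j
          · exact Or.inl hxCj
          · refine Or.inr (fun i hxi => ?_)
            by_cases hiz : i = z
            · subst hiz
              by_cases hjz : j = z
              · exact hxCj (hjz ▸ hxi)
              · exact hCiS j hjz _ (hτmemz j x hxi) hxS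
            · have hfix : τ j x = x := by
                apply hτfix j
                intro hc
                rcases hc with hc | hc
                · exact hdisj i z hiz x hxi hc
                · exact hxCj hc
              rw [hfix] at hxS
              exact hCiS i hiz x hxi hxS
        · intro hx
          rcases hx with hx | hx
          · exact hCzS _ (hτmemi j x hx)
          · have hfix : τ j x = x := hτfix j x (fun hc => by
              rcases hc with hc | hc
              · exact hx z hc
              · exact hx j hc)
            rw [hfix]
            intro i hiz
            exact hx i
      rw [hfe, Finset.sum_union (by
        apply Finset.disjoint_left.mpr
        intro x hx1 hx2
        exact (Finset.mem_filter.mp hx2).2 j (Finset.mem_filter.mp hx1).2)]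
      congr 1
      · rw [Finset.sum_congr rfl (fun x hx => ?_), ← Finset.mul_sum]
        have hxCj : x ∈ C j := (Finset.mem_filter.mp hx).2
        rw [if_pos (hτmemi j x hxCj), hτw j x]
      · apply Finset.sum_congr rfl
        intro x hx
        have hxout : ∀ i, x ∉ C i := (Finset.mem_filter.mp hx).2
        have hfix : τ j x = x := hτfix j x (fun hc => by
          rcases hc with hc | hc
          · exact hxout z hc
          · exact hxout j hc)
        rw [hfix, if_neg (hxout z)]
    -- the Hv property for the shifted set, given a suitable choice of j
    have hHv0 : ∀ j : Fin m, v ∈ (↑(Bf.image ⇑(τ j)) : Set V) →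
        (∀ t, v ∉ (psdStep T)^[t] ↑(Bf.image ⇑(τ j)) →
          ∀ u, psdForces T ((psdStep T)^[t] ↑(Bf.image ⇑(τ j))) u v →
          ∃ u' ∈ S, psdForces T ((psdStep T)^[t] ↑(Bf.image ⇑(τ j))) u' v) := by
      intro j hvD t hvt u _
      exact absurd (subset_iter _ t hvD) hvt
    -- package : from j with the property, get the final bound
    have hmain : ∀ j : Fin m, (∀ t, v ∉ (psdStep T)^[t] ↑(Bf.image ⇑(τ j)) →
          ∀ u, psdForces T ((psdStep T)^[t] ↑(Bf.image ⇑(τ j))) u v →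
          ∃ u' ∈ S, psdForces T ((psdStep T)^[t] ↑(Bf.image ⇑(τ j))) u' v) →
        psdThW (T.induce S) (fun x => if (x : V) ∈ C z then m * w ↑x else w ↑x) ≤
          (m * wi j + ∑ x ∈ Bf.filter (fun x => ∀ i, x ∉ C i), w x) + psdPt T ↑Bf := by
      intro j hHv
      have himgf : IsPSDForcing T ↑(Bf.image ⇑(τ j)) := by
        rw [Finset.coe_image]
        exact (forcing_image (τ j)).mpr hBff
      obtain ⟨hforce', hpt'⟩ := hfinish (Bf.image ⇑(τ j)) himgf hHv
      have hptB : psdPt T ↑(Bf.image ⇑(τ j)) = psdPt T ↑Bf := by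
        rw [Finset.coe_image]
        exact psdPt_image (τ j) ↑Bf
      have hwt : (∑ x ∈ (Bf.image ⇑(τ j)).subtype (· ∈ S),
          (if (x : V) ∈ C z then m * w ↑x else w ↑x)) =
          m * wi j + ∑ x ∈ Bf.filter (fun x => ∀ i, x ∉ C i), w x := by
        rw [← hWcomp j]
        exact Finset.sum_subtype_eq_sum_filter (fun x => if x ∈ C z then m * w x else w x)
      calc psdThW (T.induce S) (fun x => if (x : V) ∈ C z then m * w ↑x else w ↑x) ≤
            (∑ x ∈ (Bf.image ⇑(τ j)).subtype (· ∈ S),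
              (if (x : V) ∈ C z then m * w ↑x else w ↑x)) +
              psdPt (T.induce S) ↑((Bf.image ⇑(τ j)).subtype (· ∈ S)) :=
          psdThW_le' _ _ _ hforce'
        _ ≤ (m * wi j + ∑ x ∈ Bf.filter (fun x => ∀ i, x ∉ C i), w x) + psdPt T ↑Bf := by
          rw [hwt]
          exact Nat.add_le_add_left (le_trans hpt' (le_of_eq hptB)) _
    by_cases hcase : m * wi jm + 1 ≤ ∑ i : Fin m, wi i
    -- ============ case A : strict inequality, add v ============
    · set Dfin : Finset V := Bf.image ⇑(τ jm) ∪ {v} with hDfindef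
      have hcoeD : (↑Dfin : Set V) = ⇑(τ jm) '' ↑Bf ∪ {v} := by
        rw [hDfindef, Finset.coe_union, Finset.coe_image, Finset.coe_singleton]
      have himgf : IsPSDForcing T (⇑(τ jm) '' ↑Bf) := (forcing_image (τ jm)).mpr hBff
      have hDforce : IsPSDForcing T ↑Dfin := by
        rw [hcoeD]
        exact forcing_mono Set.subset_union_left himgf
      have hvD : v ∈ (↑Dfin : Set V) := by
        rw [hcoeD]
        exact Or.inr rfl
      have hHv : ∀ t, v ∉ (psdStep T)^[t] ↑Dfin →
          ∀ u, psdForces T ((psdStep T)^[t] ↑Dfin) u v →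
          ∃ u' ∈ S, psdForces T ((psdStep T)^[t] ↑Dfin) u' v :=
        fun t hvt u _ => absurd (subset_iter _ t hvD) hvt
      obtain ⟨hforce', hpt'⟩ := hfinish Dfin hDforce hHv
      have hptD : psdPt T ↑Dfin ≤ psdPt T ↑Bf := by
        have h2 : psdPt T ↑Dfin ≤ psdPt T (⇑(τ jm) '' ↑Bf) := by
          apply psdPt_mono _ himgf
          rw [hcoeD]
          exact Set.subset_union_left
        rwa [psdPt_image] at h2
      -- weight bound
      have hwt : (∑ x ∈ Dfin.subtype (· ∈ S),
          (if (x : V) ∈ C z then m * w ↑x else w ↑x)) ≤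
          m * wi jm + (∑ x ∈ Bf.filter (fun x => ∀ i, x ∉ C i), w x) + 1 := by
        have h0 : (∑ x ∈ Dfin.subtype (· ∈ S),
            (if (x : V) ∈ C z then m * w ↑x else w ↑x)) =
            ∑ x ∈ Dfin.filter (· ∈ S), (if x ∈ C z then m * w x else w x) :=
          Finset.sum_subtype_eq_sum_filter (fun x => if x ∈ C z then m * w x else w x)
        rw [h0, hDfindef, Finset.filter_union]
        have h1 : ({v} : Finset V).filter (· ∈ S) = {v} := by
          rw [Finset.filter_singleton, if_pos hvS]
        rw [h1]
        have h2 : (∑ x ∈ (Bf.image ⇑(τ jm)).filter (· ∈ S) ∪ {v},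
            (if x ∈ C z then m * w x else w x)) ≤
            (∑ x ∈ (Bf.image ⇑(τ jm)).filter (· ∈ S),
              (if x ∈ C z then m * w x else w x)) +
            ∑ x ∈ ({v} : Finset V), (if x ∈ C z then m * w x else w x) := by
          rw [← Finset.union_sdiff_self_eq_union, Finset.sum_union Finset.sdiff_disjoint.symm]
          exact Nat.add_le_add_left (Finset.sum_le_sum_of_subset (Finset.sdiff_subset)) _
        apply le_trans h2
        rw [hWcomp jm, Finset.sum_singleton, if_neg (hvC z), hv]
      calc psdThW (T.induce S) (fun x => if (x : V) ∈ C z then m * w ↑x else w ↑x) ≤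
            (∑ x ∈ Dfin.subtype (· ∈ S), (if (x : V) ∈ C z then m * w ↑x else w ↑x)) +
              psdPt (T.induce S) ↑(Dfin.subtype (· ∈ S)) :=
          psdThW_le' _ _ _ hforce'
        _ ≤ (m * wi jm + (∑ x ∈ Bf.filter (fun x => ∀ i, x ∉ C i), w x) + 1) +
              psdPt T ↑Bf :=
          Nat.add_le_add hwt (le_trans hpt' hptD)
        _ ≤ (∑ x ∈ Bf, w x) + psdPt T ↑Bf := by omega
    -- ============ case B : all branch weights equal ============
    · have heq : (∑ i : Fin m, wi i) = m * wi jm := le_antisymm (by omega) hsum_lb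
      have hall : ∀ j : Fin m, wi j = wi jm := by
        intro j
        by_contra hne
        have hlt : wi jm < wi j := lt_of_le_of_ne (hjm j (Finset.mem_univ j)) (Ne.symm hne)
        have h2 : (∑ i : Fin m, wi i) > ∑ _i : Fin m, wi jm := by
          apply Finset.sum_lt_sum (fun i _ => hjm i (Finset.mem_univ i)) ⟨j, Finset.mem_univ j, hlt⟩
        rw [Finset.sum_const, Finset.card_univ, Fintype.card_fin, smul_eq_mul] at h2
        omega
      -- choose j
      by_cases hvB : v ∈ (↑Bf : Set V)
      · have h1 := hmain z (hHv0 z (by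
          rw [Finset.coe_image]
          exact ⟨v, hvB, hτv z⟩))
        rw [hall z, ← heq] at h1
        omega
      · -- v is forced at some transition time
        have hPex : ∃ t, v ∈ (psdStep T)^[t] ↑Bf :=
          ⟨psdPt T ↑Bf, (iter_psdPt hBff) ▸ Set.mem_univ v⟩
        set t0 := Nat.find hPex with ht0def
        have ht0 : v ∈ (psdStep T)^[t0] ↑Bf := Nat.find_spec hPex
        have ht0pos : t0 ≠ 0 := by
          intro h
          rw [h, Function.iterate_zero_apply] at ht0
          exact hvB ht0
        have htsv : v ∉ (psdStep T)^[t0 - 1] ↑Bf :=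
          Nat.find_min hPex (by omega)
        have htsv1 : v ∈ (psdStep T)^[(t0 - 1) + 1] ↑Bf := by
          have he : (t0 - 1) + 1 = t0 := by omega
          rwa [he]
        have hstep : v ∈ psdStep T ((psdStep T)^[t0 - 1] ↑Bf) := by
          rw [Function.iterate_succ_apply'] at htsv1
          exact htsv1
        obtain ⟨u0, hu0⟩ : ∃ u0, psdForces T ((psdStep T)^[t0 - 1] ↑Bf) u0 v := by
          rcases hstep with h | h
          · exact absurd h htsv
          · exact h
        set j : Fin m := if h : ∃ i, u0 ∈ C i then h.choose else z with hjdef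
        have hju0S : τ j u0 ∈ S := by
          by_cases h : ∃ i, u0 ∈ C i
          · have hj : j = h.choose := by rw [hjdef, dif_pos h]
            have : u0 ∈ C j := hj ▸ h.choose_spec
            exact hCzS _ (hτmemi j u0 this)
          · have hj : j = z := by rw [hjdef, dif_neg h]
            push_neg at h
            have hu0S : u0 ∈ S := fun i _ => h i
            have : τ j u0 = u0 := by rw [hj]; exact hτz u0
            rwa [this]
        have hHv : ∀ t, v ∉ (psdStep T)^[t] ↑(Bf.image ⇑(τ j)) →
            ∀ u, psdForces T ((psdStep T)^[t] ↑(Bf.image ⇑(τ j))) u v →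
            ∃ u' ∈ S, psdForces T ((psdStep T)^[t] ↑(Bf.image ⇑(τ j))) u' v := by
          intro t hvt u hu
          have hDt : (psdStep T)^[t] ↑(Bf.image ⇑(τ j)) =
              ⇑(τ j) '' ((psdStep T)^[t] ↑Bf) := by
            rw [Finset.coe_image, iter_image]
          -- v is white for the original process at time t
          have hvXt : v ∉ (psdStep T)^[t] ↑Bf := by
            intro hc
            apply hvt
            rw [hDt]
            exact ⟨v, hc, hτv j⟩
          -- v is forced at time t for the original process
          have hu2 := psdForces_image (τ j) hu
          rw [hDt, ← Set.image_comp] at hu2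
          have himgid : (⇑(τ j) ∘ ⇑(τ j)) '' ((psdStep T)^[t] ↑Bf) =
              (psdStep T)^[t] ↑Bf := by
            have : (⇑(τ j) ∘ ⇑(τ j)) = id := funext (fun x => hτinv j x)
            rw [this, Set.image_id]
          rw [himgid, hτv j] at hu2
          have hvXt1 : v ∈ (psdStep T)^[t + 1] ↑Bf := by
            rw [Function.iterate_succ_apply']
            exact Or.inr ⟨τ j u, hu2⟩
          -- t must be the transition time
          have hteq : t = t0 - 1 := by
            rcases lt_trichotomy t (t0 - 1) with h | h | h
            · exact absurd (iter_le_iter (by omega) hvXt1) htsv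
            · exact h
            · exact absurd (iter_le_iter (by omega) htsv1) hvXt
          refine ⟨τ j u0, hju0S, ?_⟩
          have h5 := psdForces_image (τ j) hu0
          rw [hτv j, ← hteq] at h5
          rw [hDt]
          exact h5
        have h1 := hmain j hHv
        rw [hall j, ← heq] at h1
        omega
end

section
/- Let T = T_{α,β} be the balanced spider with α ≥ 3 legs each of order β ≥ 1, with center vertex c, and let s be an integer with 1 ≤ s ≤ β. Then: (i) the minimum of pt₊(T;B) over all PSD-forcing sets B consisting of exactly s vertices from each leg together with c equals ⌈(β − s)/(2s + 1)⌉; and (ii) the minimum of pt₊(T;B) over all PSD-forcing sets B consisting of exactly s vertices from each leg and not containing c equals ⌈(β + 1 − s)/(2s)⌉. -/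
open SimpleGraph

lemma adj_cases {α β : ℕ} {x y : Option ((_ : Fin α) × Fin β)}
    (h : (balancedSpider α β).Adj x y) :
    (∃ (i : Fin α) (j : Fin β), (j:ℕ) = 0 ∧
      (x = none ∧ y = some ⟨i,j⟩ ∨ y = none ∧ x = some ⟨i,j⟩)) ∨
    (∃ (i : Fin α) (j j' : Fin β), (j':ℕ) = (j:ℕ)+1 ∧
      (x = some ⟨i,j⟩ ∧ y = some ⟨i,j'⟩ ∨ y = some ⟨i,j⟩ ∧ x = some ⟨i,j'⟩)) := by
  obtain ⟨hne, h | h⟩ := h <;> rcases h with h | h <;> obtain ⟨a, b, h⟩ := h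
  · exact Or.inl ⟨a, b, h.1, Or.inl ⟨h.2.1, h.2.2⟩⟩
  · obtain ⟨c, h⟩ := h; exact Or.inr ⟨a, b, c, h.1, Or.inl ⟨h.2.1, h.2.2⟩⟩
  · exact Or.inl ⟨a, b, h.1, Or.inr ⟨h.2.1, h.2.2⟩⟩
  · obtain ⟨c, h⟩ := h; exact Or.inr ⟨a, b, c, h.1, Or.inr ⟨h.2.1, h.2.2⟩⟩

lemma induce_reach_eq {V W : Type*} {G : SimpleGraph V} {S : Set V} (g : V → W)
    (h : ∀ x y : S, G.Adj x y → g x = g y) {u w : S}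
    (hr : (G.induce S).Reachable u w) : g u = g w := by
  obtain ⟨p⟩ := hr
  induction p with
  | nil => rfl
  | cons h' p ih => exact (h _ _ h').trans ih

/-- L1: reachability in an induced subgraph avoiding the center stays in one leg. -/
lemma reach_same_leg {α β : ℕ} {S : Set (Option ((_ : Fin α) × Fin β))} (hno : none ∉ S)
    {u w : S} (hr : ((balancedSpider α β).induce S).Reachable u w) :
    Option.map Sigma.fst (u : Option ((_ : Fin α) × Fin β)) = Option.map Sigma.fst (w : Option ((_ : Fin α) × Fin β)) := by
  refine induce_reach_eq _ (fun x y hadj => ?_) hr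
  rcases adj_cases hadj with ⟨i, j, h0, ⟨hx, hy⟩ | ⟨hy, hx⟩⟩ | ⟨i, j, j', hjj, ⟨hx, hy⟩ | ⟨hy, hx⟩⟩
  · exact absurd (hx ▸ x.2) hno
  · exact absurd (hy ▸ y.2) hno
  all_goals simp [hx, hy]

/-- L2: reachability in an induced subgraph avoiding `some ⟨i, m⟩` preserves being in the
part of leg `i` above `m`. -/
lemma reach_high {α β : ℕ} {S : Set (Option ((_ : Fin α) × Fin β))} {i : Fin α} {m : ℕ}
    (hm : ∀ (j : Fin β), (j:ℕ) = m → some ⟨i,j⟩ ∉ S) {u w : S}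
    (hr : ((balancedSpider α β).induce S).Reachable u w) :
    (∃ j : Fin β, (u : Option ((_ : Fin α) × Fin β)) = some ⟨i,j⟩ ∧ m < (j:ℕ)) ↔
    (∃ j : Fin β, (w : Option ((_ : Fin α) × Fin β)) = some ⟨i,j⟩ ∧ m < (j:ℕ)) := by
  have key := induce_reach_eq
    (fun x => (∃ j : Fin β, x = some ⟨i,j⟩ ∧ m < (j:ℕ) : Prop)) (fun x y hadj => ?_) hr
  · exact iff_of_eq key
  rcases adj_cases hadj with ⟨i', j, h0, ⟨hx, hy⟩ | ⟨hy, hx⟩⟩ | ⟨i', j, j', hjj, ⟨hx, hy⟩ | ⟨hy, hx⟩⟩ <;>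
    refine propext ?_ <;> rw [hx, hy] <;> constructor
  · rintro ⟨j1, h1, _⟩; exact absurd h1 (by simp)
  · rintro ⟨j1, h1, hlt⟩
    obtain ⟨hi, hj⟩ : i' = i ∧ j = j1 := by simpa using h1
    omega
  · rintro ⟨j1, h1, hlt⟩
    obtain ⟨hi, hj⟩ : i' = i ∧ j = j1 := by simpa using h1
    omega
  · rintro ⟨j1, h1, _⟩; exact absurd h1 (by simp)
  · rintro ⟨j1, h1, hlt⟩
    obtain ⟨hi, hj⟩ : i' = i ∧ j = j1 := by simpa using h1
    subst hi; subst hj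
    exact ⟨j', rfl, by omega⟩
  · rintro ⟨j1, h1, hlt⟩
    obtain ⟨hi, hj⟩ : i' = i ∧ j' = j1 := by simpa using h1
    subst hi; subst hj
    refine ⟨j, rfl, ?_⟩
    rcases Nat.lt_or_ge m (j:ℕ) with h | h
    · exact h
    · have hjm : (j:ℕ) = m := by omega
      exact absurd (hx ▸ x.2) (hm j hjm)
  · rintro ⟨j1, h1, hlt⟩
    obtain ⟨hi, hj⟩ : i' = i ∧ j' = j1 := by simpa using h1
    subst hi; subst hj
    refine ⟨j, rfl, ?_⟩
    rcases Nat.lt_or_ge m (j:ℕ) with h | h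
    · exact h
    · have hjm : (j:ℕ) = m := by omega
      exact absurd (hy ▸ y.2) (hm j hjm)
  · rintro ⟨j1, h1, hlt⟩
    obtain ⟨hi, hj⟩ : i' = i ∧ j = j1 := by simpa using h1
    subst hi; subst hj
    exact ⟨j', rfl, by omega⟩

lemma induce_reach_mono {V : Type*} {G : SimpleGraph V} {S S' : Set V} (hSS : S ⊆ S')
    {u w : S} (hr : (G.induce S).Reachable u w) :
    (G.induce S').Reachable ⟨u, hSS u.2⟩ ⟨w, hSS w.2⟩ := by
  obtain ⟨p⟩ := hr
  induction p with
  | nil => rfl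
  | @cons a b c h' p ih => exact ((G.induce S').adj_symm (by exact h'.symm) : (G.induce S').Adj _ _).reachable.trans ih

lemma psdStep_mono {V : Type*} (G : SimpleGraph V) {B B' : Set V} (h : B ⊆ B') :
    psdStep G B ⊆ psdStep G B' := by
  rintro x (hx | ⟨v, hv, hadj, hw, huniq⟩)
  · exact Or.inl (h hx)
  · by_cases hx' : x ∈ B'
    · exact Or.inl hx'
    · refine Or.inr ⟨v, h hv, hadj, hx', fun u hu hvu hr => ?_⟩
      have : u ∉ B := fun h' => hu (h h')
      exact huniq u this hvu (induce_reach_mono (fun z hz => fun h' => (hz : z ∉ B') (h h') : {x | x ∉ B'} ⊆ {x | x ∉ B}) hr)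

lemma blue_speed {V : Type*} (G : SimpleGraph V) (B : Set V) (d : V → ℕ)
    (hB : ∀ x ∈ B, d x = 0) (hL : ∀ x y, G.Adj x y → d y ≤ d x + 1) :
    ∀ t x, x ∈ (psdStep G)^[t] B → d x ≤ t := by
  intro t
  induction t with
  | zero => intro x hx; simp at hx; exact (hB x hx).le
  | succ t ih =>
    intro x hx
    rw [Function.iterate_succ_apply'] at hx
    rcases hx with hx | ⟨v, hv, hadj, _⟩
    · exact (ih x hx).trans (Nat.le_succ t)
    · exact (hL v x hadj).trans (Nat.succ_le_succ (ih v hv))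


lemma adj_none_some {α β : ℕ} {i : Fin α} {j : Fin β} :
    (balancedSpider α β).Adj none (some ⟨i, j⟩) ↔ (j : ℕ) = 0 := by
  simp [spider, fromRel_adj]

lemma adj_some_some {α β : ℕ} {i i' : Fin α} {j j' : Fin β} :
    (balancedSpider α β).Adj (some ⟨i, j⟩) (some ⟨i', j'⟩) ↔
      i = i' ∧ ((j' : ℕ) = j + 1 ∨ (j : ℕ) = j' + 1) := by
  constructor
  · rintro ⟨hne, h | h⟩ <;> rcases h with h | h <;>
      obtain ⟨a, b, c, hc, h1, h2⟩ := h <;> simp_all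
  · rintro ⟨rfl, h | h⟩
    · exact ⟨by simp [Fin.ext_iff]; first
    | omega
    | (simp only [Fin.ext_iff, Fin.val_mk] at *; omega), Or.inl (Or.inr ⟨i, j, j', h, rfl, rfl⟩)⟩
    · exact ⟨by simp [Fin.ext_iff]; first
    | omega
    | (simp only [Fin.ext_iff, Fin.val_mk] at *; omega), Or.inr (Or.inr ⟨i, j', j, h, rfl, rfl⟩)⟩

section Forcing
variable {α β : ℕ} {S : Set (Option ((_ : Fin α) × Fin β))}

lemma force_up {i : Fin α} {q : ℕ} (hq1 : q < β) (hq : q + 1 < β)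
    (hv : some ⟨i, ⟨q, hq1⟩⟩ ∈ S) (hx : some ⟨i, ⟨q+1, hq⟩⟩ ∉ S) :
    some ⟨i, ⟨q+1, hq⟩⟩ ∈ psdStep (balancedSpider α β) S := by
  refine Set.mem_union_right _ ⟨some ⟨i, ⟨q, hq1⟩⟩, hv,
    adj_some_some.mpr ⟨rfl, Or.inl rfl⟩, hx, fun u hu hadj hreach => ?_⟩
  have hm : ∀ (j : Fin β), (j:ℕ) = q → some ⟨i,j⟩ ∉ {x | x ∉ S} := by
    intro j hj hmem
    exact hmem (by convert hv using 3; exact Fin.ext hj)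
  have hhigh := (reach_high hm hreach).mpr ⟨⟨q+1, hq⟩, rfl, by simp⟩
  obtain ⟨ju, hju, hlt⟩ := hhigh
  subst hju
  obtain ⟨-, h | h⟩ := adj_some_some.mp hadj
  · congr 2; exact Fin.ext h
  · first
    | omega
    | (simp only [Fin.ext_iff, Fin.val_mk] at *; omega)

lemma force_down {i : Fin α} {q : ℕ} (hq1 : q < β) (hq : q + 1 < β)
    (hv : some ⟨i, ⟨q+1, hq⟩⟩ ∈ S) (hx : some ⟨i, ⟨q, hq1⟩⟩ ∉ S) :
    some ⟨i, ⟨q, hq1⟩⟩ ∈ psdStep (balancedSpider α β) S := by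
  refine Set.mem_union_right _ ⟨some ⟨i, ⟨q+1, hq⟩⟩, hv,
    adj_some_some.mpr ⟨rfl, Or.inr rfl⟩, hx, fun u hu hadj hreach => ?_⟩
  have hm : ∀ (j : Fin β), (j:ℕ) = q+1 → some ⟨i,j⟩ ∉ {x | x ∉ S} := by
    intro j hj hmem
    exact hmem (by convert hv using 3; exact Fin.ext hj)
  have hnhigh : ¬ ∃ j : Fin β, (some ⟨i, ⟨q, hq1⟩⟩ : Option ((_ : Fin α) × Fin β)) = some ⟨i,j⟩ ∧ q+1 < (j:ℕ) := by
    rintro ⟨j, hj, hlt⟩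
    have : (⟨q, hq1⟩ : Fin β) = j := by simpa using hj
    first
    | omega
    | (simp only [Fin.ext_iff, Fin.val_mk] at *; omega)
  have hu' : ¬ ∃ j : Fin β, u = some ⟨i,j⟩ ∧ q+1 < (j:ℕ) := fun h =>
    hnhigh ((reach_high hm hreach).mp h)
  rcases adj_cases hadj with ⟨i', j, h0, ⟨hx', hy⟩ | ⟨hy, hx'⟩⟩ | ⟨i', j, j', hjj, ⟨hx', hy⟩ | ⟨hy, hx'⟩⟩
  · exact absurd hx' (by simp)
  · -- u = none, v = some ⟨i', j⟩ with j = 0 : impossible since v has index q+1 ≥ 1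
    obtain ⟨hi, hj⟩ : i = i' ∧ (⟨q+1, hq⟩ : Fin β) = j := by simpa using hx'
    first
    | omega
    | (simp only [Fin.ext_iff, Fin.val_mk] at *; omega)
  · -- v = some ⟨i', j⟩, u = some ⟨i', j'⟩, j' = j+1 = q+2 : high, contradiction
    obtain ⟨hi, hj⟩ : i = i' ∧ (⟨q+1, hq⟩ : Fin β) = j := by simpa using hx'
    subst hi
    exact absurd ⟨j', hy, by first
    | omega
    | (simp only [Fin.ext_iff, Fin.val_mk] at *; omega)⟩ hu'
  · -- u = some ⟨i', j⟩, v = some ⟨i', j'⟩, j' = j+1 : so j = q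
    obtain ⟨hi, hj⟩ : i = i' ∧ (⟨q+1, hq⟩ : Fin β) = j' := by simpa using hx'
    subst hi
    rw [hy]
    congr 2
    exact Fin.ext (by first
    | omega
    | (simp only [Fin.ext_iff, Fin.val_mk] at *; omega))

lemma force_pos0 {i : Fin α} (h0 : 0 < β) (hnone : none ∈ S)
    (hx : some ⟨i, ⟨0, h0⟩⟩ ∉ S) :
    some ⟨i, ⟨0, h0⟩⟩ ∈ psdStep (balancedSpider α β) S := by
  refine Set.mem_union_right _ ⟨none, hnone, adj_none_some.mpr rfl, hx,
    fun u hu hadj hreach => ?_⟩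
  have hleg := reach_same_leg (show none ∉ {x | x ∉ S} by simpa using hnone) hreach
  rcases adj_cases hadj with ⟨i', j, h0', ⟨hx', hy⟩ | ⟨hy, hx'⟩⟩ | ⟨i', j, j', hjj, ⟨hx', hy⟩ | ⟨hy, hx'⟩⟩
  · -- u = some ⟨i', j⟩ with j = 0
    subst hy
    simp only [Option.map_some] at hleg
    have : i' = i := by simpa using hleg
    subst this
    congr 2
    exact Fin.ext (by first
    | omega
    | (simp only [Fin.ext_iff, Fin.val_mk] at *; omega))
  · exact absurd hx' (by simp)
  · exact absurd hx' (by simp)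
  · exact absurd hx' (by simp)

lemma force_center {i : Fin α} (h0 : 0 < β) (hv : some ⟨i, ⟨0, h0⟩⟩ ∈ S)
    (hx : none ∉ S) : (none : Option ((_ : Fin α) × Fin β)) ∈ psdStep (balancedSpider α β) S := by
  refine Set.mem_union_right _ ⟨some ⟨i, ⟨0, h0⟩⟩, hv,
    (adj_none_some.mpr rfl).symm, hx, fun u hu hadj hreach => ?_⟩
  have hm : ∀ (j : Fin β), (j:ℕ) = 0 → some ⟨i,j⟩ ∉ {x | x ∉ S} := by
    intro j hj hmem
    exact hmem (by convert hv using 3; exact Fin.ext hj)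
  have hnhigh : ¬ ∃ j : Fin β, (none : Option ((_ : Fin α) × Fin β)) = some ⟨i,j⟩ ∧ 0 < (j:ℕ) := by
    rintro ⟨j, hj, _⟩; exact absurd hj (by simp)
  have hu' : ¬ ∃ j : Fin β, u = some ⟨i,j⟩ ∧ 0 < (j:ℕ) := fun h =>
    hnhigh ((reach_high hm hreach).mp h)
  rcases adj_cases hadj with ⟨i', j, h0', ⟨hx', hy⟩ | ⟨hy, hx'⟩⟩ | ⟨i', j, j', hjj, ⟨hx', hy⟩ | ⟨hy, hx'⟩⟩
  · exact absurd hx' (by simp)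
  · exact hy
  · -- v = some ⟨i', j⟩, u = some ⟨i', j'⟩ with j' = j + 1; then i' = i, j = 0, j' = 1 > 0: high
    obtain ⟨hi, hj⟩ : i = i' ∧ (⟨0, h0⟩ : Fin β) = j := by simpa using hx'
    subst hi
    exact absurd ⟨j', hy, by first
    | omega
    | (simp only [Fin.ext_iff, Fin.val_mk] at *; omega)⟩ hu'
  · -- u = some ⟨i', j⟩, v = some ⟨i', j'⟩ with j' = j+1; but v index 0 = j+1 impossible
    obtain ⟨hi, hj⟩ : i = i' ∧ (⟨0, h0⟩ : Fin β) = j' := by simpa using hx'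
    first
    | omega
    | (simp only [Fin.ext_iff, Fin.val_mk] at *; omega)

end Forcing

lemma iterate_family {V : Type*} (G : SimpleGraph V) (S : ℕ → Set V)
    (h : ∀ t, S (t+1) ⊆ psdStep G (S t)) : ∀ t, S t ⊆ (psdStep G)^[t] (S 0) := by
  intro t
  induction t with
  | zero => exact subset_rfl
  | succ t ih =>
    rw [Function.iterate_succ_apply']
    exact (h t).trans ((psdStep_mono G ih))

/-- positions of blue vertices for case (i): `bp k = min (k(2T+1)+2T) (β-s+k)`. -/
def bp (s T β k : ℕ) : ℕ := min (k*(2*T+1) + 2*T) (β - s + k)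

section BP
variable {s T β : ℕ}

lemma bp_lt (hs : 1 ≤ s) (hsβ : s ≤ β) {k : ℕ} (hk : k < s) : bp s T β k < β := by
  have := min_le_right (k*(2*T+1) + 2*T) (β - s + k)
  unfold bp; omega

lemma bp_succ_le (k : ℕ) : bp s T β (k+1) ≤ bp s T β k + (2*T+1) := by
  have ha : (k+1)*(2*T+1)+2*T = k*(2*T+1)+2*T + (2*T+1) := by ring
  unfold bp
  rw [ha]
  generalize k*(2*T+1)+2*T = A
  omega

lemma bp_lt_succ (k : ℕ) : bp s T β k < bp s T β (k+1) := by
  have ha : (k+1)*(2*T+1)+2*T = k*(2*T+1)+2*T + (2*T+1) := by ring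
  unfold bp
  rw [ha]
  generalize k*(2*T+1)+2*T = A
  omega

lemma bp_strictMono : StrictMono (bp s T β) :=
  strictMono_nat_of_lt_succ bp_lt_succ

lemma bp_zero_le : bp s T β 0 ≤ 2*T := by
  have := min_le_left (0*(2*T+1) + 2*T) (β - s + 0)
  unfold bp; omega

lemma bp_last (hs : 1 ≤ s) (hT : β ≤ 2*s*T + s + T) : β ≤ bp s T β (s-1) + T + 1 := by
  obtain ⟨s', rfl⟩ : ∃ s', s = s' + 1 := ⟨s - 1, by omega⟩
  have ha : s'*(2*T+1)+2*T + T + 1 = 2*(s'+1)*T + (s'+1) + T := by ring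
  unfold bp
  simp only [Nat.add_sub_cancel]
  omega

/-- coverage: every position is within `T` of a blue vertex or of the center chain. -/
lemma bp_cover (hs : 1 ≤ s) (hsβ : s ≤ β) (hT : β ≤ 2*s*T + s + T) {q : ℕ} (hq : q < β) :
    q < T ∨ ∃ k, k < s ∧ Nat.dist q (bp s T β k) ≤ T := by
  by_contra hcon
  push_neg at hcon
  obtain ⟨hqT, hk⟩ := hcon
  have key : ∀ k, k < s → bp s T β k + T < q := by
    intro k
    induction k with
    | zero =>
      intro h0
      have h1 := hk 0 h0
      have h2 := bp_zero_le (s := s) (T := T) (β := β)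
      simp [Nat.dist] at h1
      omega
    | succ k ih =>
      intro hks
      have h1 := ih (by omega)
      have h2 := hk (k+1) hks
      have h3 := bp_succ_le (s := s) (T := T) (β := β) k
      simp [Nat.dist] at h2
      omega
  have h1 := key (s-1) (by omega)
  have h2 := bp_last hs hT
  omega

end BP

section CaseI
variable {α β s T : ℕ}

/-- the blue set at time `t` for the case (i) construction. -/
def S1 (α β s T t : ℕ) : Set (Option ((_ : Fin α) × Fin β)) :=
  {x | x = none ∨ ∃ (i : Fin α) (j : Fin β), x = some ⟨i, j⟩ ∧
    ((j:ℕ) < t ∨ ∃ k, k < s ∧ Nat.dist (j:ℕ) (bp s T β k) ≤ t)}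

lemma mem_S1_none {t : ℕ} : (none : Option ((_ : Fin α) × Fin β)) ∈ S1 α β s T t :=
  Or.inl rfl

lemma mem_S1_some {t : ℕ} {i : Fin α} {j : Fin β} :
    (some ⟨i, j⟩ : Option ((_ : Fin α) × Fin β)) ∈ S1 α β s T t ↔
      ((j:ℕ) < t ∨ ∃ k, k < s ∧ Nat.dist (j:ℕ) (bp s T β k) ≤ t) := by
  constructor
  · rintro (h | ⟨i', j', he, hc⟩)
    · exact absurd h (by simp)
    · obtain ⟨hi, hj⟩ : i = i' ∧ j = j' := by simpa using he
      subst hi; subst hj; exact hc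
  · intro h; exact Or.inr ⟨i, j, rfl, h⟩

lemma S1_step (hs : 1 ≤ s) (hsβ : s ≤ β) (t : ℕ) :
    S1 α β s T (t+1) ⊆ psdStep (balancedSpider α β) (S1 α β s T t) := by
  intro x hx
  by_cases hxS : x ∈ S1 α β s T t
  · exact Set.mem_union_left _ hxS
  rcases hx with rfl | ⟨i, j, rfl, hcond⟩
  · exact absurd mem_S1_none hxS
  have hq : (j : ℕ) < β := j.2
  have hcond' : ¬ ((j:ℕ) < t ∨ ∃ k, k < s ∧ Nat.dist (j:ℕ) (bp s T β k) ≤ t) :=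
    fun h => hxS (mem_S1_some.mpr h)
  push_neg at hcond'
  obtain ⟨hjt, hk⟩ := hcond'
  have hxj : ∀ (h2 : (j:ℕ) < β), (some ⟨i, j⟩ : Option ((_ : Fin α) × Fin β)) =
      some ⟨i, ⟨(j:ℕ), h2⟩⟩ := by intro h2; congr 1
  rcases hcond with hq1 | ⟨k, hks, hdist⟩
  · have hqt : (j:ℕ) = t := by omega
    rcases Nat.eq_zero_or_pos (j:ℕ) with h0 | hpos
    · -- center forces position 0
      rw [show j = (⟨0, by omega⟩ : Fin β) from Fin.ext h0] at hxS ⊢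
      exact force_pos0 (by omega) mem_S1_none hxS
    · -- forced from below along the center chain
      rw [show j = (⟨((j:ℕ)-1)+1, by omega⟩ : Fin β) from Fin.ext (by simp only [Fin.val_mk]; omega)] at hxS ⊢
      exact force_up (by omega) (by omega)
        (mem_S1_some.mpr (Or.inl (by simp; omega))) hxS
  · have hk' := hk k hks
    have hb : bp s T β k < β := bp_lt hs hsβ hks
    rcases Nat.lt_or_ge (bp s T β k) (j:ℕ) with hgt | hle
    · -- j = bp k + t + 1 : forced from below
      have hje : (j:ℕ) = bp s T β k + t + 1 := by simp [Nat.dist] at hdist hk'; omega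
      rw [show j = (⟨((j:ℕ)-1)+1, by omega⟩ : Fin β) from Fin.ext (by simp only [Fin.val_mk]; omega)] at hxS ⊢
      refine force_up (by omega) (by omega)
        (mem_S1_some.mpr (Or.inr ⟨k, hks, ?_⟩)) hxS
      simp [Nat.dist]; omega
    · -- j = bp k - (t+1) : forced from above
      have hje : (j:ℕ) + t + 1 = bp s T β k := by simp [Nat.dist] at hdist hk'; omega
      rw [hxj hq] at hxS ⊢
      refine force_down (by omega) (by omega)
        (mem_S1_some.mpr (Or.inr ⟨k, hks, ?_⟩)) hxS
      simp [Nat.dist]; omega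

lemma S1_univ (hs : 1 ≤ s) (hsβ : s ≤ β) (hT : β ≤ 2*s*T + s + T) :
    S1 α β s T T = Set.univ := by
  ext x
  simp only [Set.mem_univ, iff_true]
  rcases x with _ | ⟨i, j⟩
  · exact mem_S1_none
  · exact mem_S1_some.mpr (bp_cover hs hsβ hT j.2)

lemma S1_zero :
    S1 α β s T 0 = {x | x = none ∨ ∃ (i : Fin α) (j : Fin β), x = some ⟨i, j⟩ ∧
      ∃ k, k < s ∧ (j:ℕ) = bp s T β k} := by
  unfold S1
  ext x
  simp only [Set.mem_setOf_eq, Nat.not_lt_zero, false_or, Nat.le_zero]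
  constructor <;> rintro (h | ⟨i, j, he, hc⟩)
  · exact Or.inl h
  · refine Or.inr ⟨i, j, he, ?_⟩
    obtain ⟨k, hks, hd⟩ := hc
    exact ⟨k, hks, by simp [Nat.dist] at hd; omega⟩
  · exact Or.inl h
  · refine Or.inr ⟨i, j, he, ?_⟩
    obtain ⟨k, hks, hd⟩ := hc
    exact ⟨k, hks, by simp [Nat.dist]; omega⟩

end CaseI

section B1sec
variable {α β s T : ℕ}

/-- initial blue set for case (i). -/
def B1 (α β s T : ℕ) (hβ : 0 < β) : Finset (Option ((_ : Fin α) × Fin β)) :=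
  insert none ((Finset.univ : Finset (Fin α × Fin s)).image
    (fun p => some ⟨p.1, ⟨min (bp s T β p.2) (β - 1), by omega⟩⟩))

lemma coe_B1 (hβ : 0 < β) (hs : 1 ≤ s) (hsβ : s ≤ β) :
    ↑(B1 α β s T hβ) = S1 α β s T 0 := by
  rw [S1_zero]
  ext x
  simp only [B1, Finset.coe_insert, Set.mem_insert_iff, Finset.coe_image,
    Finset.coe_univ, Set.image_univ, Set.mem_range, Set.mem_setOf_eq]
  constructor
  · rintro (rfl | ⟨⟨i, k⟩, rfl⟩)
    · exact Or.inl rfl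
    · refine Or.inr ⟨i, _, rfl, k, k.2, ?_⟩
      have := bp_lt hs hsβ (T := T) k.2
      simp only [Fin.val_mk]
      omega
  · rintro (rfl | ⟨i, j, rfl, k, hks, hj⟩)
    · exact Or.inl rfl
    · refine Or.inr ⟨⟨i, ⟨k, hks⟩⟩, ?_⟩
      have := bp_lt hs hsβ (T := T) hks
      simp only
      congr 2
      exact Fin.ext (by simp only [Fin.val_mk]; omega)

lemma B1_leg_ncard (hβ : 0 < β) (hs : 1 ≤ s) (hsβ : s ≤ β) (i : Fin α) :
    {x ∈ (↑(B1 α β s T hβ) : Set (Option ((_ : Fin α) × Fin β))) |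
      ∃ j : Fin β, x = some ⟨i, j⟩}.ncard = s := by
  classical
  have hset : {x ∈ (↑(B1 α β s T hβ) : Set (Option ((_ : Fin α) × Fin β))) |
      ∃ j : Fin β, x = some ⟨i, j⟩} =
      ↑(Finset.image (fun k : Fin s => (some ⟨i, ⟨min (bp s T β (k:ℕ)) (β - 1), by omega⟩⟩ :
          Option ((_ : Fin α) × Fin β))) Finset.univ) := by
    ext x
    simp only [Set.mem_setOf_eq, Finset.mem_coe, Finset.mem_image, Finset.mem_univ, true_and,
      B1, Finset.mem_insert]
    constructor
    · rintro ⟨rfl | hx, j, he⟩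
      · exact absurd he (by simp)
      · obtain ⟨⟨i', k⟩, hk⟩ := hx
        rw [he] at hk
        obtain ⟨hi, -⟩ : i' = i ∧ _ := by simpa using hk
        subst hi
        exact ⟨k, by rw [hk, he]⟩
    · rintro ⟨k, rfl⟩
      exact ⟨Or.inr ⟨⟨i, k⟩, rfl⟩, _, rfl⟩
  rw [hset, Set.ncard_coe_finset]
  rw [Finset.card_image_of_injOn, Finset.card_univ, Fintype.card_fin]
  intro k1 _ k2 _ he
  have h1 := bp_lt hs hsβ (T := T) k1.2
  have h2 := bp_lt hs hsβ (T := T) k2.2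
  have h3 : min (bp s T β (k1:ℕ)) (β-1) = min (bp s T β (k2:ℕ)) (β-1) := by
    simpa [Fin.ext_iff] using he
  have h4 : bp s T β (k1:ℕ) = bp s T β (k2:ℕ) := by omega
  exact Fin.ext (bp_strictMono.injective h4)

lemma B1_forces (hβ : 0 < β) (hs : 1 ≤ s) (hsβ : s ≤ β) (hT : β ≤ 2*s*T + s + T) :
    (psdStep (balancedSpider α β))^[T] ↑(B1 α β s T hβ) = Set.univ := by
  apply Set.eq_univ_of_univ_subset
  rw [coe_B1 hβ hs hsβ]
  calc Set.univ = S1 α β s T T := (S1_univ hs hsβ hT).symm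
    _ ⊆ _ := iterate_family _ _ (S1_step hs hsβ) T

end B1sec

section Lower1
variable {α β s : ℕ}

lemma leg_card {B : Finset (Option ((_ : Fin α) × Fin β))} {i : Fin α}
    (hcard : {x ∈ (↑B : Set (Option ((_ : Fin α) × Fin β))) |
      ∃ j : Fin β, x = some ⟨i, j⟩}.ncard = s) :
    (Finset.univ.filter (fun j : Fin β => some ⟨i,j⟩ ∈ B)).card = s := by
  classical
  have hset : {x ∈ (↑B : Set (Option ((_ : Fin α) × Fin β))) | ∃ j : Fin β, x = some ⟨i, j⟩} =
      ↑((Finset.univ.filter (fun j : Fin β => some ⟨i,j⟩ ∈ B)).image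
        (fun j => (some ⟨i,j⟩ : Option ((_ : Fin α) × Fin β)))) := by
    ext x
    simp only [Set.mem_setOf_eq, Finset.coe_image, Set.mem_image, Finset.mem_coe,
      Finset.mem_filter, Finset.mem_univ, true_and]
    constructor
    · rintro ⟨hxB, j, rfl⟩
      exact ⟨j, hxB, rfl⟩
    · rintro ⟨j, hj, rfl⟩
      exact ⟨hj, j, rfl⟩
  rw [hset, Set.ncard_coe_finset] at hcard
  rwa [Finset.card_image_of_injective _ (fun a b hab => by simpa [Fin.ext_iff] using hab)]
    at hcard

lemma lower1 (hα0 : 0 < α) (hs : 1 ≤ s) {B : Finset (Option ((_ : Fin α) × Fin β))}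
    (hnone : none ∈ B)
    (hcard : ∀ i : Fin α, {x ∈ (↑B : Set (Option ((_ : Fin α) × Fin β))) |
      ∃ j : Fin β, x = some ⟨i, j⟩}.ncard = s) {t : ℕ}
    (ht : (psdStep (balancedSpider α β))^[t] ↑B = Set.univ) :
    β ≤ 2*s*t + s + t := by
  classical
  set Bi : Fin α → Finset (Fin β) :=
    fun i => Finset.univ.filter (fun j : Fin β => some ⟨i,j⟩ ∈ B) with hBi
  have hBicard : ∀ i, (Bi i).card = s := fun i => leg_card (hcard i)
  have hne : ∀ i, (Bi i).Nonempty := fun i =>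
    Finset.card_pos.mp (by rw [hBicard i]; omega)
  set d : Option ((_ : Fin α) × Fin β) → ℕ := fun x =>
    match x with
    | none => 0
    | some ⟨i', q⟩ => min ((q:ℕ)+1) ((Bi i').inf' (hne i') fun b => Nat.dist q b) with hd
  have hF : ∀ (i' : Fin α) (q q' : Fin β), Nat.dist (q':ℕ) (q:ℕ) ≤ 1 →
      ((Bi i').inf' (hne i') fun b => Nat.dist (q':ℕ) b) ≤
      ((Bi i').inf' (hne i') fun b => Nat.dist (q:ℕ) b) + 1 := by
    intro i' q q' hqq
    obtain ⟨b, hb, he⟩ := Finset.exists_mem_eq_inf' (hne i') (fun b => Nat.dist (q:ℕ) b)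
    calc ((Bi i').inf' (hne i') fun b => Nat.dist (q':ℕ) b) ≤ Nat.dist (q':ℕ) b :=
          Finset.inf'_le _ hb
      _ ≤ Nat.dist (q':ℕ) (q:ℕ) + Nat.dist (q:ℕ) b := Nat.dist.triangle_inequality _ _ _
      _ ≤ _ := by omega
  have hdt : ∀ x, d x ≤ t := by
    intro x
    refine blue_speed _ _ d ?_ ?_ t x (ht ▸ Set.mem_univ x)
    · rintro (_ | ⟨i', q⟩) hx
      · rfl
      · have hq : q ∈ Bi i' := by simp [hBi]; exact hx
        have : ((Bi i').inf' (hne i') fun b => Nat.dist (q:ℕ) b) ≤ 0 := by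
          refine le_trans (Finset.inf'_le _ hq) ?_
          simp [Nat.dist_self]
        simp only [hd]
        omega
    · intro x y hadj
      rcases adj_cases hadj with ⟨i', j, h0, ⟨rfl, rfl⟩ | ⟨rfl, rfl⟩⟩ |
        ⟨i', j, j', hjj, ⟨rfl, rfl⟩ | ⟨rfl, rfl⟩⟩
      · simp only [hd]; omega
      · simp only [hd]; omega
      · have := hF i' j j' (by simp [Nat.dist]; omega)
        simp only [hd]; omega
      · have := hF i' j' j (by simp [Nat.dist]; omega)
        simp only [hd]; omega
  -- counting on leg i
  set i : Fin α := ⟨0, hα0⟩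
  have hcover : (Finset.univ : Finset (Fin β)) ⊆
      (Finset.univ.filter (fun j : Fin β => (j:ℕ)+1 ≤ t)) ∪
      (Bi i).biUnion (fun b => Finset.univ.filter (fun j : Fin β => Nat.dist (j:ℕ) (b:ℕ) ≤ t)) := by
    intro j _
    have hj := hdt (some ⟨i, j⟩)
    simp only [hd] at hj
    rcases Nat.lt_or_ge (j:ℕ) t with h | h
    · exact Finset.mem_union_left _ (by simp; omega)
    · have hFt : ((Bi i).inf' (hne i) fun b => Nat.dist (j:ℕ) b) ≤ t := by omega
      obtain ⟨b, hb, he⟩ := Finset.exists_mem_eq_inf' (hne i) (fun b => Nat.dist (j:ℕ) b)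
      refine Finset.mem_union_right _ (Finset.mem_biUnion.mpr ⟨b, hb, ?_⟩)
      simp only [Finset.mem_filter, Finset.mem_univ, true_and]
      omega
  have hc1 : (Finset.univ.filter (fun j : Fin β => (j:ℕ)+1 ≤ t)).card ≤ t := by
    have h : (Finset.univ.filter (fun j : Fin β => (j:ℕ)+1 ≤ t)).card ≤ (Finset.range t).card :=
      Finset.card_le_card_of_injOn (fun j : Fin β => (j:ℕ))
        (fun j hj => by simp at hj ⊢; omega)
        (fun j1 _ j2 _ h => Fin.ext h)
    simpa using h
  have hc2 : ∀ b : Fin β,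
      (Finset.univ.filter (fun j : Fin β => Nat.dist (j:ℕ) (b:ℕ) ≤ t)).card ≤ 2*t+1 := by
    intro b
    have h : (Finset.univ.filter (fun j : Fin β => Nat.dist (j:ℕ) (b:ℕ) ≤ t)).card ≤
        (Finset.range (2*t+1)).card :=
      Finset.card_le_card_of_injOn (fun j : Fin β => (j:ℕ) - ((b:ℕ) - t))
        (fun j hj => by replace hj := (Finset.mem_filter.mp hj).2; simp [Nat.dist] at hj ⊢; omega)
        (fun j1 h1 j2 h2 h => by
          replace h1 := (Finset.mem_filter.mp h1).2; replace h2 := (Finset.mem_filter.mp h2).2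
          simp only [Finset.coe_filter, Set.mem_setOf_eq, Finset.mem_univ, true_and,
            Nat.dist] at h1 h2
          have h' : (j1:ℕ) - ((b:ℕ) - t) = (j2:ℕ) - ((b:ℕ) - t) := h
          exact Fin.ext (by omega))
    simpa using h
  have hβle : β ≤ t + s*(2*t+1) := by
    calc β = (Finset.univ : Finset (Fin β)).card := by simp
      _ ≤ _ := Finset.card_le_card hcover
      _ ≤ (Finset.univ.filter (fun j : Fin β => (j:ℕ)+1 ≤ t)).card +
          ((Bi i).biUnion (fun b => Finset.univ.filter
            (fun j : Fin β => Nat.dist (j:ℕ) (b:ℕ) ≤ t))).card := Finset.card_union_le _ _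
      _ ≤ t + s*(2*t+1) := by
          have hbu : ((Bi i).biUnion (fun b => Finset.univ.filter
              (fun j : Fin β => Nat.dist (j:ℕ) (b:ℕ) ≤ t))).card ≤ s*(2*t+1) := by
            refine le_trans (Finset.card_biUnion_le) ?_
            calc ∑ b ∈ Bi i, (Finset.univ.filter
                  (fun j : Fin β => Nat.dist (j:ℕ) (b:ℕ) ≤ t)).card
                ≤ ∑ _b ∈ Bi i, (2*t+1) := Finset.sum_le_sum (fun b _ => hc2 b)
              _ = s*(2*t+1) := by rw [Finset.sum_const, hBicard, smul_eq_mul]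
          omega
  have hring : s*(2*t+1) = 2*s*t + s := by ring
  omega

end Lower1

section TArith
variable {β s : ℕ}

lemma T1_le (hs : 1 ≤ s) : β ≤ 2*s*((β+s)/(2*s+1)) + s + ((β+s)/(2*s+1)) := by
  have h1 := Nat.div_add_mod (β+s) (2*s+1)
  have h2 : (β+s) % (2*s+1) < 2*s+1 := Nat.mod_lt _ (by omega)
  set q := (β+s)/(2*s+1)
  set r := (β+s)%(2*s+1)
  have h3 : 2*s*q + q = (2*s+1)*q := by ring
  omega

lemma T1_min (hs : 1 ≤ s) {t : ℕ} (ht : β ≤ 2*s*t + s + t) : (β+s)/(2*s+1) ≤ t := by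
  have h1 : β + s < (t+1)*(2*s+1) := by
    have e : (t+1)*(2*s+1) = 2*s*t + s + t + (s+1) := by ring
    omega
  have := (Nat.div_lt_iff_lt_mul (show 0 < 2*s+1 by omega)).mpr h1
  omega

lemma T2_le (hs : 1 ≤ s) (hsβ : s ≤ β) : β + 1 ≤ 2*s*((β+s)/(2*s)) + s := by
  have h1 := Nat.div_add_mod (β+s) (2*s)
  have h2 : (β+s) % (2*s) < 2*s := Nat.mod_lt _ (by omega)
  set q := (β+s)/(2*s)
  set r := (β+s)%(2*s)
  omega

lemma T2_min (hs : 1 ≤ s) {t : ℕ} (ht : β + 1 ≤ 2*s*t + s) : (β+s)/(2*s) ≤ t := by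
  have h1 : β + s < (t+1)*(2*s) := by
    have e : (t+1)*(2*s) = 2*s*t + 2*s := by ring
    omega
  have := (Nat.div_lt_iff_lt_mul (show 0 < 2*s by omega)).mpr h1
  omega

lemma T2_pos (hs : 1 ≤ s) (hsβ : s ≤ β) : 1 ≤ (β+s)/(2*s) :=
  Nat.one_le_div_iff (by omega) |>.mpr (by omega)

lemma ceil1 (hs : 1 ≤ s) (hsβ : s ≤ β) :
    (((β+s)/(2*s+1) : ℕ) : ℤ) = ⌈((β : ℝ) - s) / (2*s+1)⌉ := by
  set T := (β+s)/(2*s+1) with hT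
  have hpos : (0:ℝ) < 2*(s:ℝ)+1 := by positivity
  rw [eq_comm, Int.ceil_eq_iff]
  constructor
  · rcases Nat.eq_zero_or_pos T with h0 | h1
    · rw [h0]
      push_cast
      rw [lt_div_iff₀ hpos]
      have : (s:ℝ) ≤ β := by exact_mod_cast hsβ
      nlinarith
    · obtain ⟨k, hk⟩ : ∃ k, T = k + 1 := ⟨T-1, by omega⟩
      have hmin : ¬ (β ≤ 2*s*k + s + k) := fun h => by have := T1_min hs h; omega
      have hβk : 2*s*k + s + k + 1 ≤ β := by omega
      have hc : (2*(s:ℝ)*k + s + k + 1) ≤ β := by exact_mod_cast hβk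
      rw [hk]
      push_cast
      rw [lt_div_iff₀ hpos]
      nlinarith
  · have h := T1_le (β := β) hs
    rw [← hT] at h
    have hc : (β:ℝ) ≤ 2*s*T + s + T := by exact_mod_cast h
    push_cast
    rw [div_le_iff₀ hpos]
    nlinarith
  
lemma ceil2 (hs : 1 ≤ s) (hsβ : s ≤ β) :
    (((β+s)/(2*s) : ℕ) : ℤ) = ⌈((β : ℝ) + 1 - s) / (2*s)⌉ := by
  set T := (β+s)/(2*s) with hT
  have hpos : (0:ℝ) < 2*(s:ℝ) := by positivity
  rw [eq_comm, Int.ceil_eq_iff]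
  constructor
  · have h1 := T2_pos (β := β) hs hsβ
    rw [← hT] at h1
    obtain ⟨k, hk⟩ : ∃ k, T = k + 1 := ⟨T-1, by omega⟩
    have hmin : ¬ (β + 1 ≤ 2*s*k + s) := fun h => by have := T2_min hs h; omega
    have hβk : 2*s*k + s ≤ β := by omega
    have hc : (2*(s:ℝ)*k + s) ≤ β := by exact_mod_cast hβk
    rw [hk]
    push_cast
    rw [lt_div_iff₀ hpos]
    nlinarith
  · have h := T2_le (β := β) hs hsβ
    rw [← hT] at h
    have hc : (β:ℝ) + 1 ≤ 2*s*T + s := by exact_mod_cast h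
    push_cast
    rw [div_le_iff₀ hpos]
    nlinarith

end TArith

/-- positions of blue vertices for case (ii): `bq k = min (k(2T+1)+(T-1)) (β-s+k)`. -/
def bq (s T β k : ℕ) : ℕ := min (k*(2*T+1) + (T-1)) (β - s + k)

section BQ
variable {s T β : ℕ}

lemma bq_lt (hs : 1 ≤ s) (hsβ : s ≤ β) {k : ℕ} (hk : k < s) : bq s T β k < β := by
  have := min_le_right (k*(2*T+1) + (T-1)) (β - s + k)
  unfold bq; omega

lemma bq_succ_le (k : ℕ) : bq s T β (k+1) ≤ bq s T β k + (2*T+1) := by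
  have ha : (k+1)*(2*T+1)+(T-1) = k*(2*T+1)+(T-1) + (2*T+1) := by ring
  unfold bq
  rw [ha]
  generalize k*(2*T+1)+(T-1) = A
  omega

lemma bq_lt_succ (k : ℕ) : bq s T β k < bq s T β (k+1) := by
  have ha : (k+1)*(2*T+1)+(T-1) = k*(2*T+1)+(T-1) + (2*T+1) := by ring
  unfold bq
  rw [ha]
  generalize k*(2*T+1)+(T-1) = A
  omega

lemma bq_strictMono : StrictMono (bq s T β) :=
  strictMono_nat_of_lt_succ bq_lt_succ

lemma bq_zero_le : bq s T β 0 ≤ T - 1 := by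
  have := min_le_left (0*(2*T+1) + (T-1)) (β - s + 0)
  unfold bq; omega

lemma bq_last (hs : 1 ≤ s) (hT1 : 1 ≤ T) (hT : β + 1 ≤ 2*s*T + s) :
    β ≤ bq s T β (s-1) + T + 1 := by
  obtain ⟨s', rfl⟩ : ∃ s', s = s' + 1 := ⟨s - 1, by omega⟩
  obtain ⟨T', rfl⟩ : ∃ T', T = T' + 1 := ⟨T - 1, by omega⟩
  have hrel : s'*(2*(T'+1)+1) + 2*T' + 2 = 2*(s'+1)*(T'+1) + s' := by ring
  unfold bq
  simp only [Nat.add_sub_cancel]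
  omega

lemma bq_cover (hs : 1 ≤ s) (hsβ : s ≤ β) (hT1 : 1 ≤ T) (hT : β + 1 ≤ 2*s*T + s)
    {q : ℕ} (hq : q < β) : ∃ k, k < s ∧ Nat.dist q (bq s T β k) ≤ T := by
  by_contra hcon
  push_neg at hcon
  have key : ∀ k, k < s → bq s T β k + T < q := by
    intro k
    induction k with
    | zero =>
      intro h0
      have h1 := hcon 0 h0
      have h2 := bq_zero_le (s := s) (T := T) (β := β)
      simp [Nat.dist] at h1
      omega
    | succ k ih =>
      intro hks
      have h1 := ih (by omega)
      have h2 := hcon (k+1) hks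
      have h3 := bq_succ_le (s := s) (T := T) (β := β) k
      simp [Nat.dist] at h2
      omega
  have h1 := key (s-1) (by omega)
  have h2 := bq_last hs hT1 hT
  omega

end BQ

section CaseII
variable {α β s T : ℕ}

/-- the blue set at time `t` for the case (ii) construction. -/
def S2 (α β s T t : ℕ) : Set (Option ((_ : Fin α) × Fin β)) :=
  {x | (x = none ∧ bq s T β 0 + 1 ≤ t) ∨ ∃ (i : Fin α) (j : Fin β), x = some ⟨i, j⟩ ∧
    ((∃ k, k < s ∧ Nat.dist (j:ℕ) (bq s T β k) ≤ t) ∨ bq s T β 0 + 2 + (j:ℕ) ≤ t)}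

lemma mem_S2_none {t : ℕ} :
    (none : Option ((_ : Fin α) × Fin β)) ∈ S2 α β s T t ↔ bq s T β 0 + 1 ≤ t := by
  constructor
  · rintro (⟨-, h⟩ | ⟨i, j, he, -⟩)
    · exact h
    · exact absurd he (by simp)
  · intro h; exact Or.inl ⟨rfl, h⟩

lemma mem_S2_some {t : ℕ} {i : Fin α} {j : Fin β} :
    (some ⟨i, j⟩ : Option ((_ : Fin α) × Fin β)) ∈ S2 α β s T t ↔
      ((∃ k, k < s ∧ Nat.dist (j:ℕ) (bq s T β k) ≤ t) ∨ bq s T β 0 + 2 + (j:ℕ) ≤ t) := by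
  constructor
  · rintro (⟨h, -⟩ | ⟨i', j', he, hc⟩)
    · exact absurd h (by simp)
    · obtain ⟨hi, hj⟩ : i = i' ∧ j = j' := by simpa using he
      subst hi; subst hj; exact hc
  · intro h; exact Or.inr ⟨i, j, rfl, h⟩

lemma S2_step (hα0 : 0 < α) (hs : 1 ≤ s) (hsβ : s ≤ β) (t : ℕ) :
    S2 α β s T (t+1) ⊆ psdStep (balancedSpider α β) (S2 α β s T t) := by
  intro x hx
  by_cases hxS : x ∈ S2 α β s T t
  · exact Set.mem_union_left _ hxS
  have hβ0 : 0 < β := by omega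
  rcases hx with ⟨rfl, hc⟩ | ⟨i, j, rfl, hcond⟩
  · -- the center is forced at time bq0 + 1
    have hc' : bq s T β 0 + 1 = t + 1 := by
      have := (not_iff_not.mpr (mem_S2_none (α := α) (β := β) (s := s) (T := T)
        (t := t))).mp hxS
      omega
    refine force_center (i := ⟨0, hα0⟩) hβ0 ?_ (by rwa [mem_S2_none] at hxS ⊢)
    refine mem_S2_some.mpr (Or.inl ⟨0, hs, ?_⟩)
    simp [Nat.dist]
    omega
  · have hq : (j : ℕ) < β := j.2
    have hcond' : ¬ ((∃ k, k < s ∧ Nat.dist (j:ℕ) (bq s T β k) ≤ t) ∨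
        bq s T β 0 + 2 + (j:ℕ) ≤ t) := fun h => hxS (mem_S2_some.mpr h)
    push_neg at hcond'
    obtain ⟨hk, hroute⟩ := hcond'
    have hxj : ∀ (h2 : (j:ℕ) < β), (some ⟨i, j⟩ : Option ((_ : Fin α) × Fin β)) =
        some ⟨i, ⟨(j:ℕ), h2⟩⟩ := by intro h2; congr 1
    rcases hcond with ⟨k, hks, hdist⟩ | hr
    · have hk' := hk k hks
      have hb : bq s T β k < β := bq_lt hs hsβ hks
      rcases Nat.lt_or_ge (bq s T β k) (j:ℕ) with hgt | hle
      · have hje : (j:ℕ) = bq s T β k + t + 1 := by simp [Nat.dist] at hdist hk'; omega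
        rw [show j = (⟨((j:ℕ)-1)+1, by (try simp only [Fin.val_mk]); omega⟩ : Fin β) from
          Fin.ext (by (try simp only [Fin.val_mk]); omega)] at hxS ⊢
        refine force_up (by omega) (by omega)
          (mem_S2_some.mpr (Or.inl ⟨k, hks, ?_⟩)) hxS
        simp [Nat.dist]; omega
      · have hje : (j:ℕ) + t + 1 = bq s T β k := by simp [Nat.dist] at hdist hk'; omega
        rw [hxj hq] at hxS ⊢
        refine force_down (by omega) (by omega)
          (mem_S2_some.mpr (Or.inl ⟨k, hks, ?_⟩)) hxS
        simp [Nat.dist]; omega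
    · -- forced down the leg from the center
      have hje : bq s T β 0 + 2 + (j:ℕ) = t + 1 := by omega
      have hj1 : 1 ≤ (j:ℕ) := by
        by_contra h0
        have hj0 : (j:ℕ) = 0 := by omega
        have := hk 0 hs
        simp [Nat.dist, hj0] at this
        omega
      rcases Nat.eq_or_lt_of_le hj1 with h1 | h2
      · -- j = 1 : forced by position 0? no: forcer is position 0 via center route;
        -- position 0 is blue since dist (0, bq 0) = bq 0 ≤ t
        rw [show j = (⟨0+1, by (try simp only [Fin.val_mk]); omega⟩ : Fin β) from
          Fin.ext (by (try simp only [Fin.val_mk]); omega)] at hxS ⊢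
        refine force_up (by omega) (by omega)
          (mem_S2_some.mpr (Or.inl ⟨0, hs, ?_⟩)) hxS
        simp [Nat.dist]; omega
      · rw [show j = (⟨((j:ℕ)-1)+1, by (try simp only [Fin.val_mk]); omega⟩ : Fin β) from
          Fin.ext (by (try simp only [Fin.val_mk]); omega)] at hxS ⊢
        refine force_up (by omega) (by omega)
          (mem_S2_some.mpr (Or.inr ?_)) hxS
        simp only [Fin.val_mk]
        omega

lemma S2_univ (hs : 1 ≤ s) (hsβ : s ≤ β) (hT1 : 1 ≤ T) (hT : β + 1 ≤ 2*s*T + s) :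
    S2 α β s T T = Set.univ := by
  ext x
  simp only [Set.mem_univ, iff_true]
  rcases x with _ | ⟨i, j⟩
  · refine mem_S2_none.mpr ?_
    have := bq_zero_le (s := s) (T := T) (β := β)
    omega
  · exact mem_S2_some.mpr (Or.inl (bq_cover hs hsβ hT1 hT j.2))

/-- initial blue set for case (ii). -/
def B2 (α β s T : ℕ) (hβ : 0 < β) : Finset (Option ((_ : Fin α) × Fin β)) :=
  (Finset.univ : Finset (Fin α × Fin s)).image
    (fun p => some ⟨p.1, ⟨min (bq s T β p.2) (β - 1), by omega⟩⟩)

lemma none_not_mem_B2 (hβ : 0 < β) : none ∉ B2 α β s T hβ := by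
  unfold B2
  simp

lemma coe_B2 (hβ : 0 < β) (hs : 1 ≤ s) (hsβ : s ≤ β) :
    ↑(B2 α β s T hβ) = S2 α β s T 0 := by
  ext x
  simp only [B2, Finset.coe_image, Finset.coe_univ, Set.image_univ, Set.mem_range, S2,
    Set.mem_setOf_eq, Nat.le_zero, Nat.add_eq_zero]
  constructor
  · rintro ⟨⟨i, k⟩, rfl⟩
    refine Or.inr ⟨i, _, rfl, Or.inl ⟨k, k.2, ?_⟩⟩
    have := bq_lt hs hsβ (T := T) k.2
    simp only [Fin.val_mk, Nat.dist]
    omega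
  · rintro (⟨rfl, h⟩ | ⟨i, j, rfl, hc⟩)
    · omega
    · rcases hc with ⟨k, hks, hd⟩ | h
      · refine ⟨⟨i, ⟨k, hks⟩⟩, ?_⟩
        have := bq_lt hs hsβ (T := T) hks
        simp only
        congr 2
        exact Fin.ext (by simp only [Fin.val_mk]; simp [Nat.dist] at hd; omega)
      · omega

lemma B2_leg_ncard (hβ : 0 < β) (hs : 1 ≤ s) (hsβ : s ≤ β) (i : Fin α) :
    {x ∈ (↑(B2 α β s T hβ) : Set (Option ((_ : Fin α) × Fin β))) |
      ∃ j : Fin β, x = some ⟨i, j⟩}.ncard = s := by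
  classical
  have hset : {x ∈ (↑(B2 α β s T hβ) : Set (Option ((_ : Fin α) × Fin β))) |
      ∃ j : Fin β, x = some ⟨i, j⟩} =
      ↑(Finset.image (fun k : Fin s => (some ⟨i, ⟨min (bq s T β (k:ℕ)) (β - 1), by omega⟩⟩ :
          Option ((_ : Fin α) × Fin β))) Finset.univ) := by
    ext x
    simp only [Set.mem_setOf_eq, Finset.mem_coe, Finset.mem_image, Finset.mem_univ, true_and,
      B2]
    constructor
    · rintro ⟨hx, j, he⟩
      obtain ⟨⟨i', k⟩, hk⟩ := hx
      rw [he] at hk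
      obtain ⟨hi, -⟩ : i' = i ∧ _ := by simpa using hk
      subst hi
      exact ⟨k, by rw [hk, he]⟩
    · rintro ⟨k, rfl⟩
      exact ⟨⟨⟨i, k⟩, rfl⟩, _, rfl⟩
  rw [hset, Set.ncard_coe_finset]
  rw [Finset.card_image_of_injOn, Finset.card_univ, Fintype.card_fin]
  intro k1 _ k2 _ he
  have h1 := bq_lt hs hsβ (T := T) k1.2
  have h2 := bq_lt hs hsβ (T := T) k2.2
  have h3 : min (bq s T β (k1:ℕ)) (β-1) = min (bq s T β (k2:ℕ)) (β-1) := by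
    simpa [Fin.ext_iff] using he
  have h4 : bq s T β (k1:ℕ) = bq s T β (k2:ℕ) := by omega
  exact Fin.ext (bq_strictMono.injective h4)

lemma B2_forces (hα0 : 0 < α) (hβ : 0 < β) (hs : 1 ≤ s) (hsβ : s ≤ β) (hT1 : 1 ≤ T)
    (hT : β + 1 ≤ 2*s*T + s) :
    (psdStep (balancedSpider α β))^[T] ↑(B2 α β s T hβ) = Set.univ := by
  apply Set.eq_univ_of_univ_subset
  rw [coe_B2 hβ hs hsβ]
  calc Set.univ = S2 α β s T T := (S2_univ hs hsβ hT1 hT).symm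
    _ ⊆ _ := iterate_family _ _ (S2_step hα0 hs hsβ) T

end CaseII

section Lower2
variable {α β s : ℕ}

lemma lower2 (hα0 : 0 < α) (hs : 1 ≤ s) {B : Finset (Option ((_ : Fin α) × Fin β))}
    (hnone : none ∉ B)
    (hcard : ∀ i : Fin α, {x ∈ (↑B : Set (Option ((_ : Fin α) × Fin β))) |
      ∃ j : Fin β, x = some ⟨i, j⟩}.ncard = s) {t : ℕ}
    (ht : (psdStep (balancedSpider α β))^[t] ↑B = Set.univ) :
    β + 1 ≤ 2*s*t + s := by
  classical
  set Bi : Fin α → Finset (Fin β) :=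
    fun i => Finset.univ.filter (fun j : Fin β => some ⟨i,j⟩ ∈ B) with hBi
  have hBicard : ∀ i, (Bi i).card = s := fun i => leg_card (hcard i)
  have hne : ∀ i, (Bi i).Nonempty := fun i =>
    Finset.card_pos.mp (by rw [hBicard i]; omega)
  have hαne : (Finset.univ : Finset (Fin α)).Nonempty := ⟨⟨0, hα0⟩, Finset.mem_univ _⟩
  set pv : Fin α → ℕ := fun i => (Bi i).inf' (hne i) (fun b => (b:ℕ)) with hpv
  set pm : ℕ := Finset.univ.inf' hαne pv with hpm
  set E : Option ((_ : Fin α) × Fin β) → ℕ := fun x =>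
    match x with
    | none => pm + 1
    | some ⟨i', q⟩ => min ((Bi i').inf' (hne i') fun b => Nat.dist q b) (pm + 2 + (q:ℕ)) with hE
  have hF : ∀ (i' : Fin α) (q q' : Fin β), Nat.dist (q':ℕ) (q:ℕ) ≤ 1 →
      ((Bi i').inf' (hne i') fun b => Nat.dist (q':ℕ) b) ≤
      ((Bi i').inf' (hne i') fun b => Nat.dist (q:ℕ) b) + 1 := by
    intro i' q q' hqq
    obtain ⟨b, hb, he⟩ := Finset.exists_mem_eq_inf' (hne i') (fun b => Nat.dist (q:ℕ) b)
    calc ((Bi i').inf' (hne i') fun b => Nat.dist (q':ℕ) b) ≤ Nat.dist (q':ℕ) b :=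
          Finset.inf'_le _ hb
      _ ≤ Nat.dist (q':ℕ) (q:ℕ) + Nat.dist (q:ℕ) b := Nat.dist.triangle_inequality _ _ _
      _ ≤ _ := by omega
  have hpm_le : ∀ i', pm ≤ pv i' := fun i' => Finset.inf'_le _ (Finset.mem_univ i')
  have hEt : ∀ x, E x ≤ t := by
    intro x
    refine blue_speed _ _ E ?_ ?_ t x (ht ▸ Set.mem_univ x)
    · rintro (_ | ⟨i', q⟩) hx
      · exact absurd hx hnone
      · have hq : q ∈ Bi i' := by simp [hBi]; exact hx
        have : ((Bi i').inf' (hne i') fun b => Nat.dist (q:ℕ) b) ≤ 0 := by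
          refine le_trans (Finset.inf'_le _ hq) ?_
          simp [Nat.dist_self]
        simp only [hE]
        omega
    · intro x y hadj
      rcases adj_cases hadj with ⟨i', j, h0, ⟨rfl, rfl⟩ | ⟨rfl, rfl⟩⟩ |
        ⟨i', j, j', hjj, ⟨rfl, rfl⟩ | ⟨rfl, rfl⟩⟩
      · -- center to position 0
        simp only [hE]
        omega
      · -- position 0 to center : need pm ≤ E (pos 0)
        have h1 : pm ≤ (Bi i').inf' (hne i') fun b => Nat.dist (j:ℕ) b := by
          refine Finset.le_inf' _ _ (fun b hb => ?_)
          have h2 : pv i' ≤ (b:ℕ) := Finset.inf'_le _ hb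
          have h3 := hpm_le i'
          simp [Nat.dist]
          omega
        simp only [hE]
        omega
      · have := hF i' j j' (by simp [Nat.dist]; omega)
        simp only [hE]
        omega
      · have := hF i' j' j (by simp [Nat.dist]; omega)
        simp only [hE]
        omega
  -- the center is blue only from time pm + 1 on
  have hc : pm + 1 ≤ t := hEt none
  -- pick the leg attaining the minimum
  obtain ⟨i0, -, hi0⟩ := Finset.exists_mem_eq_inf' hαne pv
  -- the bottom blue vertex of leg i0
  obtain ⟨b0, hb0, hb0e⟩ := Finset.exists_mem_eq_inf' (hne i0) (fun b => ((b:ℕ) : ℕ))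
  have hb0pm : (b0:ℕ) = pm := by rw [hpm, hi0, hpv] at *; exact hb0e.symm ▸ rfl
  have hb0min : ∀ b ∈ Bi i0, (b0:ℕ) ≤ (b:ℕ) := by
    intro b hb
    rw [hb0pm]
    have := Finset.inf'_le (fun b : Fin β => ((b:ℕ):ℕ)) hb
    rw [hi0] at hpm
    omega
  have hcover : (Finset.univ : Finset (Fin β)) ⊆
      (Finset.univ.filter (fun j : Fin β => pm + 2 + (j:ℕ) ≤ t)) ∪
      (Bi i0).biUnion (fun b => Finset.univ.filter
        (fun j : Fin β => Nat.dist (j:ℕ) (b:ℕ) ≤ t)) := by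
    intro j _
    have hj := hEt (some ⟨i0, j⟩)
    simp only [hE] at hj
    rcases le_or_gt (pm + 2 + (j:ℕ)) t with h | h
    · exact Finset.mem_union_left _ (by simp [h])
    · have hFt : ((Bi i0).inf' (hne i0) fun b => Nat.dist (j:ℕ) b) ≤ t := by omega
      obtain ⟨b, hb, he⟩ := Finset.exists_mem_eq_inf' (hne i0) (fun b => Nat.dist (j:ℕ) b)
      refine Finset.mem_union_right _ (Finset.mem_biUnion.mpr ⟨b, hb, ?_⟩)
      simp only [Finset.mem_filter, Finset.mem_univ, true_and]
      omega
  have hc1 : (Finset.univ.filter (fun j : Fin β => pm + 2 + (j:ℕ) ≤ t)).card ≤ t - pm - 1 := by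
    have h : (Finset.univ.filter (fun j : Fin β => pm + 2 + (j:ℕ) ≤ t)).card ≤
        (Finset.range (t - pm - 1)).card :=
      Finset.card_le_card_of_injOn (fun j : Fin β => (j:ℕ))
        (fun j hj => by simp at hj ⊢; omega)
        (fun j1 _ j2 _ h => Fin.ext h)
    simpa using h
  have hc2 : ∀ b : Fin β,
      (Finset.univ.filter (fun j : Fin β => Nat.dist (j:ℕ) (b:ℕ) ≤ t)).card ≤ 2*t+1 := by
    intro b
    have h : (Finset.univ.filter (fun j : Fin β => Nat.dist (j:ℕ) (b:ℕ) ≤ t)).card ≤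
        (Finset.range (2*t+1)).card :=
      Finset.card_le_card_of_injOn (fun j : Fin β => (j:ℕ) - ((b:ℕ) - t))
        (fun j hj => by replace hj := (Finset.mem_filter.mp hj).2; simp [Nat.dist] at hj ⊢; omega)
        (fun j1 h1 j2 h2 h => by
          replace h1 := (Finset.mem_filter.mp h1).2; replace h2 := (Finset.mem_filter.mp h2).2
          simp only [Finset.coe_filter, Set.mem_setOf_eq, Finset.mem_univ, true_and,
            Nat.dist] at h1 h2
          have h' : (j1:ℕ) - ((b:ℕ) - t) = (j2:ℕ) - ((b:ℕ) - t) := h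
          exact Fin.ext (by omega))
    simpa using h
  have hcb0 : (Finset.univ.filter (fun j : Fin β => Nat.dist (j:ℕ) ((b0:ℕ)) ≤ t)).card ≤
      pm + t + 1 := by
    have h : (Finset.univ.filter (fun j : Fin β => Nat.dist (j:ℕ) (b0:ℕ) ≤ t)).card ≤
        (Finset.range (pm + t + 1)).card :=
      Finset.card_le_card_of_injOn (fun j : Fin β => (j:ℕ))
        (fun j hj => by replace hj := (Finset.mem_filter.mp hj).2; simp [Nat.dist] at hj ⊢; omega)
        (fun j1 _ j2 _ h => Fin.ext h)
    simpa using h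
  have hbu : ((Bi i0).biUnion (fun b => Finset.univ.filter
      (fun j : Fin β => Nat.dist (j:ℕ) (b:ℕ) ≤ t))).card ≤ (s-1)*(2*t+1) + (pm+t+1) := by
    refine le_trans Finset.card_biUnion_le ?_
    rw [← Finset.sum_erase_add _ _ hb0]
    have h1 : ∑ b ∈ (Bi i0).erase b0, (Finset.univ.filter
        (fun j : Fin β => Nat.dist (j:ℕ) (b:ℕ) ≤ t)).card ≤ (s-1)*(2*t+1) := by
      calc _ ≤ ∑ _b ∈ (Bi i0).erase b0, (2*t+1) := Finset.sum_le_sum (fun b _ => hc2 b)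
        _ = (s-1)*(2*t+1) := by
            rw [Finset.sum_const, Finset.card_erase_of_mem hb0, hBicard, smul_eq_mul]
    omega
  have hβle : β ≤ (t - pm - 1) + ((s-1)*(2*t+1) + (pm+t+1)) := by
    calc β = (Finset.univ : Finset (Fin β)).card := by simp
      _ ≤ _ := Finset.card_le_card hcover
      _ ≤ _ := Finset.card_union_le _ _
      _ ≤ _ := by gcongr
  have hs' : ∃ s', s = s'+1 := ⟨s-1, by omega⟩
  obtain ⟨s', rfl⟩ := hs'
  have hring : (s'+1-1)*(2*t+1) = 2*s'*t + s' := by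
    simp only [Nat.add_sub_cancel]
    ring
  have hring2 : 2*(s'+1)*t = 2*s'*t + 2*t := by ring
  omega

end Lower2

/-- For the balanced spider `T_{α,β}` (`α ≥ 3`, `1 ≤ s ≤ β`): the minimum PSD-propagation
time over PSD-forcing sets consisting of exactly `s` vertices from each leg together with the
center equals `⌈(β - s)/(2s + 1)⌉`, and the minimum over those consisting of exactly `s`
vertices from each leg and not the center equals `⌈(β + 1 - s)/(2s)⌉`. -/
theorem stmt5 (α β s : ℕ) (hα : 3 ≤ α) (hβ : 1 ≤ β) (hs : 1 ≤ s) (hsβ : s ≤ β) :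
    (((sInf {t : ℕ | ∃ B : Finset (Option ((_ : Fin α) × Fin β)),
        IsPSDForcing (balancedSpider α β) ↑B ∧ none ∈ B ∧
        (∀ i : Fin α,
          {x ∈ (B : Set (Option ((_ : Fin α) × Fin β))) | ∃ j : Fin β, x = some ⟨i, j⟩}.ncard
            = s) ∧
        t = psdPt (balancedSpider α β) ↑B} : ℕ) : ℤ)
      = ⌈((β : ℝ) - s) / (2 * s + 1)⌉) ∧
    (((sInf {t : ℕ | ∃ B : Finset (Option ((_ : Fin α) × Fin β)),
        IsPSDForcing (balancedSpider α β) ↑B ∧ none ∉ B ∧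
        (∀ i : Fin α,
          {x ∈ (B : Set (Option ((_ : Fin α) × Fin β))) | ∃ j : Fin β, x = some ⟨i, j⟩}.ncard
            = s) ∧
        t = psdPt (balancedSpider α β) ↑B} : ℕ) : ℤ)
      = ⌈((β : ℝ) + 1 - s) / (2 * s)⌉) := by
  have hβ0 : 0 < β := hβ
  have hα0 : 0 < α := by omega
  constructor
  · -- case (i)
    set T1 := (β+s)/(2*s+1) with hT1def
    have hT : β ≤ 2*s*T1 + s + T1 := T1_le hs
    have hforce := B1_forces (α := α) (T := T1) hβ0 hs hsβ hT
    have hnoneB1 : none ∈ B1 α β s T1 hβ0 := by unfold B1; simp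
    have hpt : psdPt (balancedSpider α β) ↑(B1 α β s T1 hβ0) = T1 := by
      have hmem : T1 ∈ {t | (psdStep (balancedSpider α β))^[t]
          ↑(B1 α β s T1 hβ0) = Set.univ} := hforce
      refine le_antisymm (Nat.sInf_le hmem) ?_
      have h0 := Nat.sInf_mem (⟨T1, hmem⟩ : {t | (psdStep (balancedSpider α β))^[t]
          ↑(B1 α β s T1 hβ0) = Set.univ}.Nonempty)
      exact T1_min hs (lower1 hα0 hs hnoneB1
        (fun i => B1_leg_ncard hβ0 hs hsβ i) h0)
    have hmemS : T1 ∈ {t : ℕ | ∃ B : Finset (Option ((_ : Fin α) × Fin β)),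
        IsPSDForcing (balancedSpider α β) ↑B ∧ none ∈ B ∧
        (∀ i : Fin α,
          {x ∈ (B : Set (Option ((_ : Fin α) × Fin β))) | ∃ j : Fin β, x = some ⟨i, j⟩}.ncard
            = s) ∧
        t = psdPt (balancedSpider α β) ↑B} :=
      ⟨B1 α β s T1 hβ0, ⟨T1, hforce⟩, hnoneB1,
        (fun i => B1_leg_ncard hβ0 hs hsβ i), hpt.symm⟩
    have hInf : sInf {t : ℕ | ∃ B : Finset (Option ((_ : Fin α) × Fin β)),
        IsPSDForcing (balancedSpider α β) ↑B ∧ none ∈ B ∧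
        (∀ i : Fin α,
          {x ∈ (B : Set (Option ((_ : Fin α) × Fin β))) | ∃ j : Fin β, x = some ⟨i, j⟩}.ncard
            = s) ∧
        t = psdPt (balancedSpider α β) ↑B} = T1 := by
      refine le_antisymm (Nat.sInf_le hmemS) ?_
      obtain ⟨B, hBf, hBnone, hBcards, hBt⟩ := Nat.sInf_mem (⟨T1, hmemS⟩ :
        Set.Nonempty {t : ℕ | ∃ B : Finset (Option ((_ : Fin α) × Fin β)),
        IsPSDForcing (balancedSpider α β) ↑B ∧ none ∈ B ∧
        (∀ i : Fin α,
          {x ∈ (B : Set (Option ((_ : Fin α) × Fin β))) | ∃ j : Fin β, x = some ⟨i, j⟩}.ncard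
            = s) ∧
        t = psdPt (balancedSpider α β) ↑B})
      rw [hBt]
      have h0 := Nat.sInf_mem hBf
      exact T1_min hs (lower1 hα0 hs hBnone hBcards h0)
    rw [hInf]
    exact ceil1 hs hsβ
  · -- case (ii)
    set T2 := (β+s)/(2*s) with hT2def
    have hT : β + 1 ≤ 2*s*T2 + s := T2_le hs hsβ
    have hT21 : 1 ≤ T2 := T2_pos hs hsβ
    have hforce := B2_forces (α := α) (T := T2) hα0 hβ0 hs hsβ hT21 hT
    have hnoneB2 : none ∉ B2 α β s T2 hβ0 := none_not_mem_B2 hβ0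
    have hpt : psdPt (balancedSpider α β) ↑(B2 α β s T2 hβ0) = T2 := by
      have hmem : T2 ∈ {t | (psdStep (balancedSpider α β))^[t]
          ↑(B2 α β s T2 hβ0) = Set.univ} := hforce
      refine le_antisymm (Nat.sInf_le hmem) ?_
      have h0 := Nat.sInf_mem (⟨T2, hmem⟩ : {t | (psdStep (balancedSpider α β))^[t]
          ↑(B2 α β s T2 hβ0) = Set.univ}.Nonempty)
      exact T2_min hs (lower2 hα0 hs hnoneB2
        (fun i => B2_leg_ncard hβ0 hs hsβ i) h0)
    have hmemS : T2 ∈ {t : ℕ | ∃ B : Finset (Option ((_ : Fin α) × Fin β)),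
        IsPSDForcing (balancedSpider α β) ↑B ∧ none ∉ B ∧
        (∀ i : Fin α,
          {x ∈ (B : Set (Option ((_ : Fin α) × Fin β))) | ∃ j : Fin β, x = some ⟨i, j⟩}.ncard
            = s) ∧
        t = psdPt (balancedSpider α β) ↑B} :=
      ⟨B2 α β s T2 hβ0, ⟨T2, hforce⟩, hnoneB2,
        (fun i => B2_leg_ncard hβ0 hs hsβ i), hpt.symm⟩
    have hInf : sInf {t : ℕ | ∃ B : Finset (Option ((_ : Fin α) × Fin β)),
        IsPSDForcing (balancedSpider α β) ↑B ∧ none ∉ B ∧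
        (∀ i : Fin α,
          {x ∈ (B : Set (Option ((_ : Fin α) × Fin β))) | ∃ j : Fin β, x = some ⟨i, j⟩}.ncard
            = s) ∧
        t = psdPt (balancedSpider α β) ↑B} = T2 := by
      refine le_antisymm (Nat.sInf_le hmemS) ?_
      obtain ⟨B, hBf, hBnone, hBcards, hBt⟩ := Nat.sInf_mem (⟨T2, hmemS⟩ :
        Set.Nonempty {t : ℕ | ∃ B : Finset (Option ((_ : Fin α) × Fin β)),
        IsPSDForcing (balancedSpider α β) ↑B ∧ none ∉ B ∧
        (∀ i : Fin α,
          {x ∈ (B : Set (Option ((_ : Fin α) × Fin β))) | ∃ j : Fin β, x = some ⟨i, j⟩}.ncard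
            = s) ∧
        t = psdPt (balancedSpider α β) ↑B})
      rw [hBt]
      have h0 := Nat.sInf_mem hBf
      exact T2_min hs (lower2 hα0 hs hBnone hBcards h0)
    rw [hInf]
    exact ceil2 hs hsβ
end
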